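/- arXiv:1708.07367 — 4 statements merged into one kernel-verified Lean document; each statement's English description precedes it below -/
import Mathlib

section
/- For any π̄ ∈ (0,1/4) and any estimator γ̂⋆ that maps a sample path of length n ≤ 1/(4π̄) to a real number, and for any choice of initial state distribution, there exists a two-state ergodic reversible Markov chain with absolute spectral gap γ⋆ ≥ 1/2 and minimum stationary probability π⋆ ≥ π̄ such that, when the sample path (X_1,...,X_n) is drawn from this chain started from the given initial distribution, Pr[|γ̂⋆(X_1,...,X_n) − γ⋆| ≥ 1/8] ≥ 3/8. -/
open Finset Matrix Real MeasureTheory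
open scoped Classical BigOperators

namespace MCEst

/-- A row-stochastic matrix. -/
def IsStochastic {d : ℕ} (P : Matrix (Fin d) (Fin d) ℝ) : Prop :=
  (∀ i j, 0 ≤ P i j) ∧ ∀ i, ∑ j, P i j = 1

/-- A probability vector. -/
def IsProbVec {d : ℕ} (q : Fin d → ℝ) : Prop :=
  (∀ i, 0 ≤ q i) ∧ ∑ i, q i = 1

/-- Ergodicity (irreducibility + aperiodicity) of a finite stochastic matrix,
expressed as primitivity. -/
def IsErgodic {d : ℕ} (P : Matrix (Fin d) (Fin d) ℝ) : Prop :=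
  ∃ k : ℕ, ∀ i j, 0 < (P ^ k) i j

/-- `π` is a stationary distribution of `P`. -/
def IsStationary {d : ℕ} (P : Matrix (Fin d) (Fin d) ℝ) (w : Fin d → ℝ) : Prop :=
  IsProbVec w ∧ ∀ j, ∑ i, w i * P i j = w j

/-- Reversibility (detailed balance) of `P` w.r.t. `π`. -/
def IsReversible {d : ℕ} (P : Matrix (Fin d) (Fin d) ℝ) (w : Fin d → ℝ) : Prop :=
  ∀ i j, w i * P i j = w j * P j i

/-- The absolute spectral gap: one minus the largest absolute value of an
eigenvalue (root of the characteristic polynomial) different from 1. -/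
noncomputable def absSpectralGap {d : ℕ} (P : Matrix (Fin d) (Fin d) ℝ) : ℝ :=
  1 - sSup {x : ℝ | ∃ μ : ℝ, μ ≠ 1 ∧ P.charpoly.IsRoot μ ∧ x = |μ|}

/-- Minimum entry of a vector. -/
noncomputable def minEntry {d : ℕ} (v : Fin d → ℝ) : ℝ := ⨅ i, v i

/-- Probability of observing the sample path `x` (0-indexed, i.e. `x 0 = X_1`)
when the chain has initial distribution `q` and transition matrix `P`. -/
noncomputable def pathProb {d n : ℕ} (q : Fin d → ℝ) (P : Matrix (Fin d) (Fin d) ℝ)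
    (x : Fin n → Fin d) : ℝ :=
  ∏ t : Fin n,
    if (t : ℕ) = 0 then q (x t)
    else P (x ⟨(t : ℕ) - 1, by have := t.isLt; omega⟩) (x t)

/-- Probability of an event for the length-`n` sample path of the chain. -/
noncomputable def prob {d n : ℕ} (q : Fin d → ℝ) (P : Matrix (Fin d) (Fin d) ℝ)
    (E : Set (Fin n → Fin d)) : ℝ :=
  ∑ x : Fin n → Fin d, if x ∈ E then pathProb q P x else 0

/-- The successor of an index within `Fin n` (cyclically). -/
def succAt {n : ℕ} (t : Fin n) : Fin n :=
  ⟨((t : ℕ) + 1) % n, Nat.mod_lt _ (by have := t.isLt; omega)⟩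

/-- Empirical state frequencies. -/
noncomputable def pihat {d n : ℕ} (x : Fin n → Fin d) (i : Fin d) : ℝ :=
  ((univ.filter fun t => x t = i).card : ℝ) / n

/-- Empirical doublet frequencies. -/
noncomputable def Mhat {d n : ℕ} (x : Fin n → Fin d) : Matrix (Fin d) (Fin d) ℝ :=
  Matrix.of fun i j =>
    ((univ.filter fun t : Fin n => (t : ℕ) + 1 < n ∧ x t = i ∧ x (succAt t) = j).card : ℝ)
      / ((n : ℝ) - 1)

/-- Number of visits to `i` among the first `n-1` states. -/
def Ncount {d n : ℕ} (x : Fin n → Fin d) (i : Fin d) : ℕ :=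
  (univ.filter fun t : Fin n => (t : ℕ) + 1 < n ∧ x t = i).card

/-- Number of observed transitions from `i` to `j`. -/
def Npair {d n : ℕ} (x : Fin n → Fin d) (i j : Fin d) : ℕ :=
  (univ.filter fun t : Fin n => (t : ℕ) + 1 < n ∧ x t = i ∧ x (succAt t) = j).card

/-- Plug-in estimate of the matrix L. -/
noncomputable def Lhat {d n : ℕ} (x : Fin n → Fin d) : Matrix (Fin d) (Fin d) ℝ :=
  Matrix.of fun i j => Mhat x i j / (Real.sqrt (pihat x i) * Real.sqrt (pihat x j))

/-- Symmetrization of a square matrix. -/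
noncomputable def symPart {d : ℕ} (A : Matrix (Fin d) (Fin d) ℝ) : Matrix (Fin d) (Fin d) ℝ :=
  (1 / 2 : ℝ) • (A + Aᵀ)

lemma symPart_isHermitian {d : ℕ} (A : Matrix (Fin d) (Fin d) ℝ) :
    (symPart A).IsHermitian := by
  unfold symPart Matrix.IsHermitian
  ext i j
  simp [Matrix.conjTranspose_apply, Matrix.transpose_apply, Matrix.add_apply,
    Matrix.smul_apply]
  ring

/-- Eigenvalues of a hermitian matrix sorted in ascending order. -/
noncomputable def lamAsc {d : ℕ} {A : Matrix (Fin d) (Fin d) ℝ} (hA : A.IsHermitian) :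
    Fin d → ℝ :=
  hA.eigenvalues ∘ Tuple.sort hA.eigenvalues

/-- The plug-in spectral gap estimator γ̂⋆ = 1 - min{1, max{λ̂₂, |λ̂_d|}}
(equal to 0 when some empirical frequency vanishes). -/
noncomputable def gapEstimator {d n : ℕ} (x : Fin n → Fin d) : ℝ :=
  if h : 1 < d ∧ ∀ i, 0 < pihat x i then
    1 - min 1 (max (lamAsc (symPart_isHermitian (Lhat x)) ⟨d - 2, by have := h.1; omega⟩)
        |lamAsc (symPart_isHermitian (Lhat x)) ⟨0, by have := h.1; omega⟩|)
  else 0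

/-- Spectral norm (ℓ²-operator norm) of a real square matrix. -/
noncomputable def specNorm {d : ℕ} (A : Matrix (Fin d) (Fin d) ℝ) : ℝ :=
  ‖Matrix.toEuclideanCLM (𝕜 := ℝ) A‖

/-- The matrix L = Diag(π)^{1/2} P Diag(π)^{-1/2}. -/
noncomputable def Lgen {d : ℕ} (w : Fin d → ℝ) (P : Matrix (Fin d) (Fin d) ℝ) :
    Matrix (Fin d) (Fin d) ℝ :=
  Matrix.of fun i j => Real.sqrt (w i) * P i j / Real.sqrt (w j)

/-- Laplace-smoothed transition probability estimates. -/
noncomputable def Phat {d n : ℕ} (α : ℝ) (x : Fin n → Fin d) : Matrix (Fin d) (Fin d) ℝ :=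
  Matrix.of fun i j => ((Npair x i j : ℝ) + α) / ((Ncount x i : ℝ) + d * α)

/-- The threshold t̂ from the algorithm. -/
noncomputable def that (d n : ℕ) (c δ : ℝ) : ℝ :=
  sInf {t : ℝ | 0 ≤ t ∧
    2 * (d : ℝ) ^ 2 * (1 + (⌈Real.logb c (2 * n / t)⌉₊ : ℝ)) * Real.exp (-t) ≤ δ}

/-- The empirical bound B̂_{i,j}. -/
noncomputable def Bhat {d n : ℕ} (α c δ : ℝ) (x : Fin n → Fin d) (i j : Fin d) : ℝ :=
  (Real.sqrt (c * that d n c δ / (2 * (Ncount x i : ℝ))) +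
    Real.sqrt (c * that d n c δ / (2 * (Ncount x i : ℝ)) +
      Real.sqrt (2 * c * Phat α x i j * (1 - Phat α x i j) * that d n c δ / (Ncount x i : ℝ)) +
      ((4 / 3) * that d n c δ + |α - d * α * Phat α x i j|) / (Ncount x i : ℝ))) ^ 2

/-- Group inverse of a square matrix (when it exists). -/
noncomputable def groupInv {d : ℕ} (A : Matrix (Fin d) (Fin d) ℝ) :
    Matrix (Fin d) (Fin d) ℝ :=
  if h : ∃ G, A * G * A = A ∧ G * A * G = G ∧ A * G = G * A then h.choose else 0

/-- The (unique) stationary distribution of `P` (when it exists). -/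
noncomputable def statDist {d : ℕ} (P : Matrix (Fin d) (Fin d) ℝ) : Fin d → ℝ :=
  if h : ∃ w, IsStationary P w then h.choose else 0

/-- The a-skipped sample path (X_a, X_{2a}, ..., X_{(n/a)·a}). -/
def skipPath {d n : ℕ} (a : ℕ) (x : Fin n → Fin d) : Fin (n / a) → Fin d :=
  fun s => x ⟨a * s.1 + (a - 1), by
    have hs := s.isLt
    rcases Nat.eq_zero_or_pos a with h | h
    · subst h; simp [Nat.div_zero] at hs
    · have h2 : a * (s.1 + 1) ≤ a * (n / a) := Nat.mul_le_mul_left a hs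
      have h3 : a * (n / a) ≤ n := Nat.mul_div_le n a
      have h4 : a * (s.1 + 1) = a * s.1 + a := Nat.mul_succ a s.1
      omega⟩

/-- The skip amount A = 2^k chosen by the doubling procedure. -/
noncomputable def Askip {d n : ℕ} (x : Fin n → Fin d) : ℕ :=
  if h : ∃ k : ℕ, 0.31 < gapEstimator (skipPath (2 ^ k) x) ∨ 2 ^ k = n then
    2 ^ Nat.find h
  else n

/-- The doubling-skip estimator γ̃⋆ = 1 - (1 - γ̂⋆(A))^{1/A}. -/
noncomputable def tildeGap {d n : ℕ} (x : Fin n → Fin d) : ℝ :=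
  1 - (1 - gapEstimator (skipPath (Askip x) x)) ^ ((Askip x : ℝ)⁻¹)

/-- Transition matrix with moves into `j` suppressed. -/
noncomputable def avoid {d : ℕ} (P : Matrix (Fin d) (Fin d) ℝ) (j : Fin d) :
    Matrix (Fin d) (Fin d) ℝ :=
  Matrix.of fun k l => if l = j then 0 else P k l

/-- Expected first positive hitting time of `j` starting from `i`:
`E_i[τ_j] = ∑_{t ≥ 0} Pr_i(τ_j > t)`. -/
noncomputable def expHit {d : ℕ} (P : Matrix (Fin d) (Fin d) ℝ) (i j : Fin d) : ℝ :=
  ∑' t : ℕ, ∑ l, ((avoid P j) ^ t) i l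

/-- The mixing time of the chain. -/
noncomputable def mixingTime {d : ℕ} (P : Matrix (Fin d) (Fin d) ℝ) (w : Fin d → ℝ) : ℕ :=
  sInf {t : ℕ | ∀ q : Fin d → ℝ, IsProbVec q →
    ∀ A : Finset (Fin d), |∑ i ∈ A, ((q ᵥ* (P ^ t)) i - w i)| ≤ 1 / 4}

/-- Algorithm 1: smoothed transition probability estimates (α = 1/d). -/
noncomputable def algPhat {d n : ℕ} (x : Fin n → Fin d) : Matrix (Fin d) (Fin d) ℝ :=
  Phat (1 / (d : ℝ)) x

/-- Algorithm 1: stationary distribution of the smoothed estimate. -/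
noncomputable def algPi {d n : ℕ} (x : Fin n → Fin d) : Fin d → ℝ :=
  statDist (algPhat x)

/-- Algorithm 1: spectral gap estimate. -/
noncomputable def algGap {d n : ℕ} (x : Fin n → Fin d) : ℝ :=
  if h : 1 < d then
    1 - max (lamAsc (symPart_isHermitian (Lgen (algPi x) (algPhat x))) ⟨d - 2, by omega⟩)
        |lamAsc (symPart_isHermitian (Lgen (algPi x) (algPhat x))) ⟨0, by omega⟩|
  else 0

/-- Algorithm 1: relative sensitivity κ̂ computed from the group inverse. -/
noncomputable def algKappa {d n : ℕ} (x : Fin n → Fin d) : ℝ :=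
  (1 / 2) * ⨆ j, (groupInv (1 - algPhat x) j j - ⨅ i, groupInv (1 - algPhat x) i j)

/-- Algorithm 1: bound b̂ on the stationary distribution error. -/
noncomputable def algb {d n : ℕ} (δ : ℝ) (x : Fin n → Fin d) : ℝ :=
  algKappa x * ⨆ i, ⨆ j, Bhat (1 / (d : ℝ)) 1.1 δ x i j

/-- Algorithm 1: the quantity ρ̂. -/
noncomputable def algRho {d n : ℕ} (δ : ℝ) (x : Fin n → Fin d) : ℝ :=
  (1 / 2) * ⨆ i, max (algb δ x / algPi x i) (algb δ x / max 0 (algPi x i - algb δ x))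

/-- Algorithm 1: bound ŵ on the spectral gap error. -/
noncomputable def algw {d n : ℕ} (δ : ℝ) (x : Fin n → Fin d) : ℝ :=
  2 * algRho δ x + algRho δ x ^ 2 +
    (1 + 2 * algRho δ x + algRho δ x ^ 2) *
      Real.sqrt (∑ i, ∑ j, (algPi x i / algPi x j) * Bhat (1 / (d : ℝ)) 1.1 δ x i j ^ 2)

/-- Observable lower bound on the minimum stationary probability from Algorithm 1. -/
noncomputable def algPiLB {d n : ℕ} (δ : ℝ) (x : Fin n → Fin d) : ℝ :=
  ⨅ i, max 0 (algPi x i - algb δ x)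

/-- Observable lower bound on the spectral gap from Algorithm 1. -/
noncomputable def algGapLB {d n : ℕ} (δ : ℝ) (x : Fin n → Fin d) : ℝ :=
  max 0 (algGap x - algw δ x)



section LowerBoundAux

lemma pathProb_cons {d n : ℕ} (q : Fin d → ℝ) (P : Matrix (Fin d) (Fin d) ℝ)
    (i : Fin d) (y : Fin n → Fin d) :
    pathProb q P (Fin.cons i y) = q i * pathProb (fun j => P i j) P y := by
  unfold pathProb
  rw [Fin.prod_univ_succ]
  simp only [Fin.val_zero, if_pos rfl, Fin.cons_zero]
  congr 1
  apply Finset.prod_congr rfl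
  intro s _
  have h1 : ((Fin.succ s : Fin (n+1)) : ℕ) = (s : ℕ) + 1 := rfl
  rw [if_neg (by omega), Fin.cons_succ]
  rcases Nat.eq_zero_or_pos (s : ℕ) with h | h
  · rw [if_pos h]
    have h2 : (⟨((Fin.succ s : Fin (n+1)) : ℕ) - 1, by omega⟩ : Fin (n+1)) = 0 := by
      apply Fin.ext; simp [h1, h]
    rw [h2, Fin.cons_zero]
  · rw [if_neg (by omega)]
    have h2 : (⟨((Fin.succ s : Fin (n+1)) : ℕ) - 1, by omega⟩ : Fin (n+1))
        = Fin.succ ⟨(s:ℕ)-1, by omega⟩ := by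
      apply Fin.ext; simp [h1]; omega
    rw [h2, Fin.cons_succ]

lemma sum_pi_succ {d n : ℕ} (f : (Fin (n+1) → Fin d) → ℝ) :
    ∑ x : Fin (n+1) → Fin d, f x = ∑ i : Fin d, ∑ y : Fin n → Fin d, f (Fin.cons i y) := by
  have h := Fintype.sum_equiv (Fin.consEquiv fun _ => Fin d)
    (fun p => f (Fin.cons p.1 p.2)) f (fun p => rfl)
  rw [← h, Fintype.sum_prod_type]


lemma pathProb_nonneg {d n : ℕ} {q : Fin d → ℝ} {P : Matrix (Fin d) (Fin d) ℝ}
    (hq : ∀ i, 0 ≤ q i) (hP : ∀ i j, 0 ≤ P i j) (x : Fin n → Fin d) :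
    0 ≤ pathProb q P x := by
  apply Finset.prod_nonneg
  intro t _
  by_cases h : (t : ℕ) = 0 <;> simp [h, hq, hP]

lemma sum_pathProb {d : ℕ} {P : Matrix (Fin d) (Fin d) ℝ} (hP : IsStochastic P) :
    ∀ n (q : Fin d → ℝ), IsProbVec q → ∑ x : Fin n → Fin d, pathProb q P x = 1 := by
  intro n
  induction n with
  | zero => intro q hq; simp [pathProb]
  | succ n ih =>
    intro q hq
    rw [sum_pi_succ]
    have : ∀ i : Fin d, ∑ y : Fin n → Fin d, pathProb q P (Fin.cons i y) = q i := by
      intro i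
      simp only [pathProb_cons]
      rw [← Finset.mul_sum, ih (fun j => P i j) ⟨fun j => hP.1 i j, hP.2 i⟩, mul_one]
    simp only [this]
    exact hq.2

lemma sum_pathProb_diff_init {d : ℕ} {P : Matrix (Fin d) (Fin d) ℝ} (hP : IsStochastic P)
    (n : ℕ) (p p' : Fin d → ℝ) :
    ∑ x : Fin n → Fin d, |pathProb p P x - pathProb p' P x| ≤ ∑ j, |p j - p' j| := by
  cases n with
  | zero =>
    simp [pathProb]
    exact Finset.sum_nonneg fun j _ => abs_nonneg _
  | succ n =>
    rw [sum_pi_succ]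
    apply Finset.sum_le_sum
    intro j _
    simp only [pathProb_cons]
    calc ∑ y : Fin n → Fin d, |p j * pathProb (fun k => P j k) P y
          - p' j * pathProb (fun k => P j k) P y|
        = ∑ y : Fin n → Fin d, |p j - p' j| * pathProb (fun k => P j k) P y := by
          apply Finset.sum_congr rfl; intro y _
          rw [← sub_mul, abs_mul,
            abs_of_nonneg (pathProb_nonneg (fun k => hP.1 j k) hP.1 y)]
      _ = |p j - p' j| := by
          rw [← Finset.mul_sum, sum_pathProb hP n _ ⟨fun k => hP.1 j k, hP.2 j⟩, mul_one]
      _ ≤ |p j - p' j| := le_rfl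

lemma fin2_ne (s : Fin 2) : (1 - s : Fin 2) ≠ s := by revert s; decide
lemma fin2_eq_sub (s : Fin 2) {i : Fin 2} (h : i ≠ s) : i = 1 - s := by revert s i; decide
lemma sum_fin2 (f : Fin 2 → ℝ) (s : Fin 2) : ∑ i, f i = f s + f (1 - s) := by
  fin_cases s <;> simp [Fin.sum_univ_two] <;> ring

lemma charpoly_root_two (M : Matrix (Fin 2) (Fin 2) ℝ) (μ : ℝ) :
    M.charpoly.IsRoot μ ↔ (μ - M 0 0) * (μ - M 1 1) - M 0 1 * M 1 0 = 0 := by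
  rw [Matrix.charpoly, Matrix.det_fin_two, Matrix.charmatrix_apply_eq,
    Matrix.charmatrix_apply_eq, Matrix.charmatrix_apply_ne _ _ _ (by decide),
    Matrix.charmatrix_apply_ne _ _ _ (by decide)]
  simp [Polynomial.IsRoot]

noncomputable def Pm (s : Fin 2) (ε r : ℝ) : Matrix (Fin 2) (Fin 2) ℝ :=
  Matrix.of fun i j =>
    if i = s then (if j = s then 1 - r else r) else (if j = s then ε else 1 - ε)
noncomputable def wm (s : Fin 2) (ε r : ℝ) : Fin 2 → ℝ :=
  fun i => if i = s then ε / (ε + r) else r / (ε + r)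

section chain
variable {s : Fin 2} {ε r : ℝ} (hε0 : 0 < ε) (hε1 : ε < 1) (hr0 : 0 < r) (hr1 : r < 1)
include hε0 hε1 hr0 hr1

lemma Pm_stochastic : IsStochastic (Pm s ε r) := by
  constructor
  · intro i j
    by_cases hi : i = s <;> by_cases hj : j = s <;> simp [Pm, hi, hj] <;> linarith
  · intro i
    rw [sum_fin2 _ s]
    by_cases hi : i = s <;> simp [Pm, hi, fin2_ne s] <;> ring

lemma Pm_ergodic : IsErgodic (Pm s ε r) := by
  refine ⟨1, fun i j => ?_⟩
  rw [pow_one]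
  by_cases hi : i = s <;> by_cases hj : j = s <;> simp [Pm, hi, hj] <;> linarith

lemma wm_probVec : IsProbVec (wm s ε r) := by
  constructor
  · intro i
    by_cases hi : i = s <;> simp [wm, hi] <;> positivity
  · rw [sum_fin2 _ s]
    simp [wm, fin2_ne s]
    field_simp

lemma Pm_stationary : IsStationary (Pm s ε r) (wm s ε r) := by
  refine ⟨wm_probVec hε0 hε1 hr0 hr1, fun j => ?_⟩
  rw [sum_fin2 _ s]
  have hne := fin2_ne s
  by_cases hj : j = s <;> simp [Pm, wm, hj, hne] <;> field_simp <;> ring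

lemma Pm_reversible : IsReversible (Pm s ε r) (wm s ε r) := by
  intro i j
  have hne := fin2_ne s
  by_cases hi : i = s <;> by_cases hj : j = s <;>
    simp [Pm, wm, hi, hj, hne] <;> field_simp <;> ring

lemma Pm_gap (hεr : ε + r ≤ 1) : absSpectralGap (Pm s ε r) = ε + r := by
  have hch : ∀ μ : ℝ, (Pm s ε r).charpoly.IsRoot μ ↔ (μ - 1) * (μ - (1 - ε - r)) = 0 := by
    intro μ
    rw [charpoly_root_two]
    fin_cases s <;> simp only [Pm, Matrix.of_apply, -mul_eq_zero] <;> norm_num [-mul_eq_zero] <;>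
      constructor <;> intro h <;> linear_combination h
  have hset : {x : ℝ | ∃ μ : ℝ, μ ≠ 1 ∧ (Pm s ε r).charpoly.IsRoot μ ∧ x = |μ|}
      = {|1 - ε - r|} := by
    ext x
    simp only [Set.mem_setOf_eq, Set.mem_singleton_iff]
    constructor
    · rintro ⟨μ, hμ, hroot, rfl⟩
      rw [hch] at hroot
      rcases mul_eq_zero.1 hroot with h | h
      · exact absurd (by linarith : μ = 1) hμ
      · rw [show μ = 1 - ε - r by linarith]
    · rintro rfl
      exact ⟨1 - ε - r, by intro h; rw [← h] at hεr; linarith [hε0, hr0],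
        (hch _).2 (by ring), rfl⟩
  rw [absSpectralGap, hset, csSup_singleton, abs_of_nonneg (by linarith)]
  ring

end chain


lemma tv_bound {P0 P1 : Matrix (Fin 2) (Fin 2) ℝ} {s : Fin 2} {ε : ℝ}
    (h0 : IsStochastic P0) (h1 : IsStochastic P1)
    (hrow : ∀ i, i ≠ s → P0 i = P1 i)
    (hD : ∑ j, |P0 s j - P1 s j| ≤ 1/2)
    (hstay : P1 s s ≤ 1/4)
    (hent : ∀ i, i ≠ s → P1 i s ≤ ε) (hε : 0 ≤ ε) :
    ∀ n (q : Fin 2 → ℝ), IsProbVec q →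
      ∑ x : Fin n → Fin 2, |pathProb q P0 x - pathProb q P1 x|
        ≤ (2/3) * q s + (2/3) * ε * n := by
  intro n
  induction n with
  | zero =>
    intro q hq
    simp [pathProb]
    nlinarith [hq.1 s, hε]
  | succ n ih =>
    intro q hq
    rw [sum_pi_succ]
    have rowPV : ∀ i : Fin 2, IsProbVec (fun j => P1 i j) :=
      fun i => ⟨fun j => h1.1 i j, h1.2 i⟩
    -- bound for i = s
    have hs : ∑ y : Fin n → Fin 2,
        |pathProb q P0 (Fin.cons s y) - pathProb q P1 (Fin.cons s y)|
        ≤ q s * (1/2 + ((2/3) * (1/4) + (2/3) * ε * n)) := by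
      have e1 : ∀ y : Fin n → Fin 2,
          |pathProb q P0 (Fin.cons s y) - pathProb q P1 (Fin.cons s y)|
          = q s * |pathProb (fun j => P0 s j) P0 y - pathProb (fun j => P1 s j) P1 y| := by
        intro y
        rw [pathProb_cons, pathProb_cons, ← mul_sub, abs_mul, abs_of_nonneg (hq.1 s)]
      simp only [e1]
      rw [← Finset.mul_sum]
      apply mul_le_mul_of_nonneg_left _ (hq.1 s)
      calc ∑ y : Fin n → Fin 2,
            |pathProb (fun j => P0 s j) P0 y - pathProb (fun j => P1 s j) P1 y|
          ≤ ∑ y : Fin n → Fin 2,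
            (|pathProb (fun j => P0 s j) P0 y - pathProb (fun j => P1 s j) P0 y|
             + |pathProb (fun j => P1 s j) P0 y - pathProb (fun j => P1 s j) P1 y|) := by
            apply Finset.sum_le_sum
            intro y _
            exact abs_sub_le _ _ _
        _ = (∑ y : Fin n → Fin 2,
              |pathProb (fun j => P0 s j) P0 y - pathProb (fun j => P1 s j) P0 y|)
            + ∑ y : Fin n → Fin 2,
              |pathProb (fun j => P1 s j) P0 y - pathProb (fun j => P1 s j) P1 y| :=
            Finset.sum_add_distrib
        _ ≤ 1/2 + ((2/3) * (1/4) + (2/3) * ε * n) := by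
            apply add_le_add
            · exact le_trans (sum_pathProb_diff_init h0 n _ _) hD
            · refine le_trans (ih (fun j => P1 s j) (rowPV s)) ?_
              have : (2:ℝ)/3 * P1 s s ≤ 2/3 * (1/4) := by linarith
              linarith
    -- bound for i = 1 - s
    have hne : (1 - s : Fin 2) ≠ s := by
      have : ∀ t : Fin 2, (1 - t : Fin 2) ≠ t := by decide
      exact this s
    have hos : ∑ y : Fin n → Fin 2,
        |pathProb q P0 (Fin.cons (1-s) y) - pathProb q P1 (Fin.cons (1-s) y)|
        ≤ q (1-s) * ((2/3) * ε + (2/3) * ε * n) := by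
      have e1 : ∀ y : Fin n → Fin 2,
          |pathProb q P0 (Fin.cons (1-s) y) - pathProb q P1 (Fin.cons (1-s) y)|
          = q (1-s) * |pathProb (fun j => P1 (1-s) j) P0 y
              - pathProb (fun j => P1 (1-s) j) P1 y| := by
        intro y
        rw [pathProb_cons, pathProb_cons, hrow _ hne, ← mul_sub, abs_mul,
          abs_of_nonneg (hq.1 _)]
      simp only [e1]
      rw [← Finset.mul_sum]
      apply mul_le_mul_of_nonneg_left _ (hq.1 _)
      refine le_trans (ih (fun j => P1 (1-s) j) (rowPV _)) ?_
      have : (2:ℝ)/3 * P1 (1-s) s ≤ (2/3) * ε := by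
        have := hent _ hne; linarith
      linarith
    rw [sum_fin2 (fun i => ∑ y : Fin n → Fin 2,
      |pathProb q P0 (Fin.cons i y) - pathProb q P1 (Fin.cons i y)|) s]
    have hq1 : q s + q (1-s) = 1 := by
      have := hq.2
      rw [sum_fin2 q s] at this
      linarith
    have h0s := hq.1 s
    have h1s := hq.1 (1-s)
    have hεn : (0:ℝ) ≤ ε * n := by positivity
    push_cast
    nlinarith [hs, hos]

end LowerBoundAux

/-- lower bound for two-state chains. -/
theorem statement0 (pibar : ℝ) (hpibar0 : 0 < pibar) (hpibar1 : pibar < 1 / 4)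
    (n : ℕ) (hn : (n : ℝ) ≤ 1 / (4 * pibar))
    (est : (Fin n → Fin 2) → ℝ)
    (q : Fin 2 → ℝ) (hq : IsProbVec q) :
    ∃ (P : Matrix (Fin 2) (Fin 2) ℝ) (w : Fin 2 → ℝ),
      IsStochastic P ∧ IsErgodic P ∧ IsStationary P w ∧ IsReversible P w ∧
      1 / 2 ≤ absSpectralGap P ∧ pibar ≤ minEntry w ∧
      3 / 8 ≤ prob q P {x | 1 / 8 ≤ |est x - absSpectralGap P|} := by
  set s : Fin 2 := if q 0 ≤ q 1 then 0 else 1 with hsdef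
  have hqs : q s ≤ 1 / 2 := by
    have hsum := hq.2
    rw [Fin.sum_univ_two] at hsum
    by_cases h : q 0 ≤ q 1 <;> simp [hsdef, h] <;> linarith [hq.1 0, hq.1 1]
  set ε : ℝ := 3 / 4 * pibar / (1 - pibar) with hεdef
  have hp1 : (0:ℝ) < 1 - pibar := by linarith
  have hε0 : 0 < ε := by positivity
  have hε4 : ε < 1 / 4 := by rw [hεdef, div_lt_iff₀ hp1]; nlinarith
  have hε1 : ε < 1 := by linarith
  have hkeyε : ε * (1 - pibar) = 3 / 4 * pibar := by
    rw [hεdef]; field_simp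
  have hεp : ε ≤ pibar := by nlinarith
  have hεn : ε * n ≤ 1 / 4 := by
    have h2 : pibar * n ≤ 1 / 4 := by
      have h3 := mul_le_mul_of_nonneg_left hn hpibar0.le
      rw [mul_one_div] at h3
      calc pibar * n ≤ pibar / (4 * pibar) := h3
        _ = 1 / 4 := by field_simp
    have h4 : ε * n ≤ pibar * n := by
      apply mul_le_mul_of_nonneg_right hεp (Nat.cast_nonneg n)
    linarith
  set P0 := Pm s ε (1/2) with hP0def
  set P1 := Pm s ε (3/4) with hP1def
  have st0 : IsStochastic P0 := Pm_stochastic hε0 hε1 (by norm_num) (by norm_num)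
  have st1 : IsStochastic P1 := Pm_stochastic hε0 hε1 (by norm_num) (by norm_num)
  have g0 : absSpectralGap P0 = ε + 1/2 :=
    Pm_gap hε0 hε1 (by norm_num) (by norm_num) (by linarith)
  have g1 : absSpectralGap P1 = ε + 3/4 :=
    Pm_gap hε0 hε1 (by norm_num) (by norm_num) (by linarith)
  have hmin : ∀ r : ℝ, 1/2 ≤ r → r ≤ 3/4 → pibar ≤ minEntry (wm s ε r) := by
    intro r h1 h2
    apply le_ciInf
    intro i
    have hεr : 0 < ε + r := by linarith
    by_cases hi : i = s
    · rw [show wm s ε r i = ε / (ε + r) by simp [wm, hi], le_div_iff₀ hεr]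
      nlinarith
    · rw [show wm s ε r i = r / (ε + r) by simp [wm, hi], le_div_iff₀ hεr]
      nlinarith
  -- total variation bound
  have hrow : ∀ i, i ≠ s → P0 i = P1 i := by
    intro i hi; funext j; simp [hP0def, hP1def, Pm, hi]
  have hD : ∑ j, |P0 s j - P1 s j| ≤ 1/2 := by
    have e1 : ∀ r : ℝ, Pm s ε r s s = 1 - r := by intro r; simp [Pm]
    have e2 : ∀ r : ℝ, Pm s ε r s (1 - s) = r := by intro r; simp [Pm, fin2_ne s]
    rw [sum_fin2 _ s, hP0def, hP1def, e1, e1, e2, e2,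
      show (1:ℝ) - 1/2 - (1 - 3/4) = 1/4 by ring,
      show (1:ℝ)/2 - 3/4 = -(1/4) by ring, abs_neg, abs_of_nonneg (by norm_num : (0:ℝ) ≤ 1/4)]
    norm_num
  have hstay : P1 s s ≤ 1/4 := by
    rw [hP1def, show Pm s ε (3/4) s s = 1 - 3/4 by simp [Pm]]
    norm_num
  have hent : ∀ i, i ≠ s → P1 i s ≤ ε := by
    intro i hi
    rw [hP1def, show Pm s ε (3/4) i s = ε by simp [Pm, hi]]
  have hT : ∑ x : Fin n → Fin 2, |pathProb q P0 x - pathProb q P1 x| ≤ 1/2 := by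
    refine le_trans (tv_bound st0 st1 hrow hD hstay hent hε0.le n q hq) ?_
    nlinarith [hqs, hεn]
  -- the two failure events
  set E0 : Set (Fin n → Fin 2) := {x | 1 / 8 ≤ |est x - (ε + 1/2)|} with hE0def
  set E1 : Set (Fin n → Fin 2) := {x | 1 / 8 ≤ |est x - (ε + 3/4)|} with hE1def
  have hA0 : ∑ x : Fin n → Fin 2, pathProb q P0 x = 1 := sum_pathProb st0 n q hq
  have hA1 : ∑ x : Fin n → Fin 2, pathProb q P1 x = 1 := sum_pathProb st1 n q hq
  have hkey : ∀ x ∈ (univ : Finset (Fin n → Fin 2)),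
      (pathProb q P0 x + pathProb q P1 x - |pathProb q P0 x - pathProb q P1 x|) / 2
      ≤ (if x ∈ E0 then pathProb q P0 x else 0) + (if x ∈ E1 then pathProb q P1 x else 0) := by
    intro x _
    have h0x : 0 ≤ pathProb q P0 x := pathProb_nonneg hq.1 st0.1 x
    have h1x : 0 ≤ pathProb q P1 x := pathProb_nonneg hq.1 st1.1 x
    have hor : x ∈ E0 ∨ x ∈ E1 := by
      by_contra hcon
      push_neg at hcon
      obtain ⟨hc0, hc1⟩ := hcon
      rw [hE0def, Set.mem_setOf_eq, not_le, abs_lt] at hc0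
      rw [hE1def, Set.mem_setOf_eq, not_le, abs_lt] at hc1
      linarith [hc0.1, hc0.2, hc1.1, hc1.2]
    rcases hor with h | h
    · rw [if_pos h]
      have h2 : (0:ℝ) ≤ if x ∈ E1 then pathProb q P1 x else 0 := by
        split_ifs <;> simp [h1x]
      have h3 := neg_abs_le (pathProb q P0 x - pathProb q P1 x)
      linarith
    · rw [if_pos h]
      have h2 : (0:ℝ) ≤ if x ∈ E0 then pathProb q P0 x else 0 := by
        split_ifs <;> simp [h0x]
      have h3 := le_abs_self (pathProb q P0 x - pathProb q P1 x)
      linarith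
  have hsum := Finset.sum_le_sum hkey
  rw [Finset.sum_add_distrib] at hsum
  have hLHS : 3/4 ≤ ∑ x : Fin n → Fin 2,
      (pathProb q P0 x + pathProb q P1 x - |pathProb q P0 x - pathProb q P1 x|) / 2 := by
    rw [← Finset.sum_div, Finset.sum_sub_distrib, Finset.sum_add_distrib, hA0, hA1]
    linarith
  have hprob : 3/4 ≤ prob q P0 E0 + prob q P1 E1 := by
    unfold prob
    exact le_trans hLHS hsum
  have hfinal : 3/8 ≤ prob q P0 E0 ∨ 3/8 ≤ prob q P1 E1 := by
    by_contra hcon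
    push_neg at hcon
    linarith [hcon.1, hcon.2]
  rcases hfinal with h | h
  · refine ⟨P0, wm s ε (1/2), st0,
      Pm_ergodic hε0 hε1 (by norm_num) (by norm_num),
      Pm_stationary hε0 hε1 (by norm_num) (by norm_num),
      Pm_reversible hε0 hε1 (by norm_num) (by norm_num),
      by rw [g0]; linarith,
      hmin _ (by norm_num) (by norm_num), ?_⟩
    rw [g0]
    exact h
  · refine ⟨P1, wm s ε (3/4), st1,
      Pm_ergodic hε0 hε1 (by norm_num) (by norm_num),
      Pm_stationary hε0 hε1 (by norm_num) (by norm_num),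
      Pm_reversible hε0 hε1 (by norm_num) (by norm_num),
      by rw [g1]; linarith,
      hmin _ (by norm_num) (by norm_num), ?_⟩
    rw [g1]
    exact h

end MCEst
end

section
/- For n ≥ 2, the expected empirical doublet matrix satisfies ‖ Diag(π)^{-1/2} ( E[M̂] − M ) Diag(π)^{-1/2} ‖ ≤ 1 / ( (n−1) γ⋆ π⋆ ), where ‖·‖ is the spectral norm, M = Diag(π) P, and E[M̂] = (1/(n−1)) Σ_{t=1}^{n−1} Diag(π^{(t)}) P. -/
open Finset Matrix Real MeasureTheory
open scoped Classical BigOperators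

namespace MCEst

section AuxiliaryLemmas

open scoped RealInnerProductSpace

variable {d : ℕ}

lemma euclid_norm_sq (x : EuclideanSpace ℝ (Fin d)) : ‖x‖ ^ 2 = ∑ i, (x i) ^ 2 := by
  rw [EuclideanSpace.norm_eq, Real.sq_sqrt (by positivity)]
  exact Finset.sum_congr rfl fun i _ => by rw [Real.norm_eq_abs, sq_abs]

lemma clm_apply (T : Matrix (Fin d) (Fin d) ℝ) (x : EuclideanSpace ℝ (Fin d)) (j : Fin d) :
    (Matrix.toEuclideanCLM (𝕜 := ℝ) T x) j = (T *ᵥ (fun i => x i)) j := rfl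

lemma clm_norm_le {T : Matrix (Fin d) (Fin d) ℝ} (hT : T.IsHermitian) {c : ℝ} (hc0 : 0 ≤ c)
    (hc : ∀ (μ : ℝ) (x : Fin d → ℝ), x ≠ 0 → T *ᵥ x = μ • x → |μ| ≤ c)
    (x : EuclideanSpace ℝ (Fin d)) :
    ‖Matrix.toEuclideanCLM (𝕜 := ℝ) T x‖ ≤ c * ‖x‖ := by
  set b := hT.eigenvectorBasis with hb
  have heig : ∀ i, |hT.eigenvalues i| ≤ c := by
    intro i
    refine hc _ (⇑(b i)) ?_ (hT.mulVec_eigenvectorBasis i)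
    intro h0
    exact b.orthonormal.ne_zero i (by ext j; exact congrFun h0 j)
  have hsa : _root_.IsSelfAdjoint (Matrix.toEuclideanCLM (𝕜 := ℝ) T) := by
    rw [_root_.IsSelfAdjoint, ← map_star]; exact congrArg _ hT
  have hTb : ∀ i, Matrix.toEuclideanCLM (𝕜 := ℝ) T (b i) = hT.eigenvalues i • b i := by
    intro i
    ext j
    have h1 := congrFun (hT.mulVec_eigenvectorBasis i) j
    simpa [clm_apply] using h1
  have hrepr : ∀ i, b.repr (Matrix.toEuclideanCLM (𝕜 := ℝ) T x) i
      = hT.eigenvalues i * b.repr x i := by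
    intro i
    rw [b.repr_apply_apply, b.repr_apply_apply]
    have h2 : ⟪b i, Matrix.toEuclideanCLM (𝕜 := ℝ) T x⟫
        = ⟪Matrix.toEuclideanCLM (𝕜 := ℝ) T (b i), x⟫ := by
      conv_rhs => rw [← ContinuousLinearMap.isSelfAdjoint_iff'.mp hsa]
      rw [ContinuousLinearMap.adjoint_inner_left]
    rw [h2, hTb i, real_inner_smul_left]
  have h1 : ‖Matrix.toEuclideanCLM (𝕜 := ℝ) T x‖ ^ 2 ≤ (c * ‖x‖) ^ 2 := by
    rw [← b.repr.norm_map (Matrix.toEuclideanCLM (𝕜 := ℝ) T x), ← b.repr.norm_map x]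
    rw [euclid_norm_sq, mul_pow, euclid_norm_sq, Finset.mul_sum]
    refine Finset.sum_le_sum fun i _ => ?_
    rw [hrepr i, mul_pow]
    have h3 : (hT.eigenvalues i) ^ 2 ≤ c ^ 2 := by
      rw [← sq_abs]
      exact pow_le_pow_left₀ (abs_nonneg _) (heig i) 2
    nlinarith [sq_nonneg (b.repr x i)]
  have h0 : (0:ℝ) ≤ c * ‖x‖ := mul_nonneg hc0 (norm_nonneg _)
  nlinarith [norm_nonneg (Matrix.toEuclideanCLM (𝕜 := ℝ) T x)]

lemma specNorm_le_of_eig {T : Matrix (Fin d) (Fin d) ℝ} (hT : T.IsHermitian) {c : ℝ}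
    (hc0 : 0 ≤ c)
    (hc : ∀ (μ : ℝ) (x : Fin d → ℝ), x ≠ 0 → T *ᵥ x = μ • x → |μ| ≤ c) :
    ‖Matrix.toEuclideanCLM (𝕜 := ℝ) T‖ ≤ c :=
  ContinuousLinearMap.opNorm_le_bound _ hc0 (clm_norm_le hT hc0 hc)

lemma mulVec_sq_sum_le {T : Matrix (Fin d) (Fin d) ℝ} (hT : T.IsHermitian) {c : ℝ}
    (hc0 : 0 ≤ c)
    (hc : ∀ (μ : ℝ) (x : Fin d → ℝ), x ≠ 0 → T *ᵥ x = μ • x → |μ| ≤ c)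
    (z : Fin d → ℝ) : ∑ j, ((T *ᵥ z) j) ^ 2 ≤ c ^ 2 * ∑ j, z j ^ 2 := by
  set y : EuclideanSpace ℝ (Fin d) := (WithLp.equiv 2 _).symm z with hy
  have h := clm_norm_le hT hc0 hc y
  have h2 := pow_le_pow_left₀ (norm_nonneg _) h 2
  rw [euclid_norm_sq, mul_pow, euclid_norm_sq] at h2
  exact h2

lemma mulVec_pow_sq_sum_le {T : Matrix (Fin d) (Fin d) ℝ} (hT : T.IsHermitian) {c : ℝ}
    (hc0 : 0 ≤ c)
    (hc : ∀ (μ : ℝ) (x : Fin d → ℝ), x ≠ 0 → T *ᵥ x = μ • x → |μ| ≤ c)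
    (z : Fin d → ℝ) (t : ℕ) :
    ∑ j, ((T ^ t *ᵥ z) j) ^ 2 ≤ (c ^ 2) ^ t * ∑ j, z j ^ 2 := by
  induction t with
  | zero => simp [Matrix.one_mulVec]
  | succ t ih =>
    have hstep : T ^ (t + 1) *ᵥ z = T *ᵥ (T ^ t *ᵥ z) := by
      rw [pow_succ', ← Matrix.mulVec_mulVec]
    rw [hstep]
    calc ∑ j, ((T *ᵥ (T ^ t *ᵥ z)) j) ^ 2 ≤ c ^ 2 * ∑ j, ((T ^ t *ᵥ z) j) ^ 2 :=
        mulVec_sq_sum_le hT hc0 hc _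
      _ ≤ c ^ 2 * ((c ^ 2) ^ t * ∑ j, z j ^ 2) := mul_le_mul_of_nonneg_left ih (by positivity)
      _ = (c ^ 2) ^ (t + 1) * ∑ j, z j ^ 2 := by ring

lemma IsStochastic.pow {P : Matrix (Fin d) (Fin d) ℝ} (hP : IsStochastic P) (k : ℕ) :
    IsStochastic (P ^ k) := by
  induction k with
  | zero =>
    refine ⟨fun i j => ?_, fun i => ?_⟩ <;> simp [Matrix.one_apply]
    · positivity
  | succ k ih =>
    rw [pow_succ]
    constructor
    · intro i j
      rw [Matrix.mul_apply]
      exact Finset.sum_nonneg fun l _ => mul_nonneg (ih.1 i l) (hP.1 l j)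
    · intro i
      simp only [Matrix.mul_apply]
      rw [Finset.sum_comm]
      calc ∑ l, ∑ j, (P ^ k) i l * P l j = ∑ l, (P ^ k) i l * ∑ j, P l j := by
            simp [Finset.mul_sum]
        _ = 1 := by simp [hP.2, ih.2 i]

lemma mul_pos_entries {Q R : Matrix (Fin d) (Fin d) ℝ} (hQ : ∀ i j, 0 < Q i j)
    (hR : ∀ i j, 0 < R i j) : ∀ i j, 0 < (Q * R) i j := by
  intro i j
  rw [Matrix.mul_apply]
  exact Finset.sum_pos (fun l _ => mul_pos (hQ i l) (hR l j)) ⟨i, Finset.mem_univ i⟩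

lemma const_of_posStoch {Q : Matrix (Fin d) (Fin d) ℝ} (hQs : ∀ i, ∑ j, Q i j = 1)
    (hpos : ∀ i j, 0 < Q i j) {y : Fin d → ℝ} (hy : Q *ᵥ y = y) (i j : Fin d) : y i = y j := by
  obtain ⟨i₀, -, hmax⟩ := Finset.exists_max_image Finset.univ y ⟨i, Finset.mem_univ i⟩
  suffices h : ∀ l, y l = y i₀ by rw [h i, h j]
  have hQy : ∑ l, Q i₀ l * y l = y i₀ := by
    have h1 := congrFun hy i₀
    simpa [Matrix.mulVec, dotProduct] using h1
  have hsum : ∑ l, Q i₀ l * (y i₀ - y l) = 0 := by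
    simp only [mul_sub, Finset.sum_sub_distrib, ← Finset.sum_mul, hQs i₀, hQy, one_mul, sub_self]
  have hz := (Finset.sum_eq_zero_iff_of_nonneg (fun l _ =>
    mul_nonneg (hpos i₀ l).le (sub_nonneg.mpr (hmax l (Finset.mem_univ l))))).mp hsum
  intro l
  have h3 := hz l (Finset.mem_univ l)
  rcases mul_eq_zero.mp h3 with h4 | h4
  · exact absurd h4 (hpos i₀ l).ne'
  · linarith

lemma abs_eig_le_one {P : Matrix (Fin d) (Fin d) ℝ} (hP : IsStochastic P) {μ : ℝ}
    {x : Fin d → ℝ} (hx : x ≠ 0) (h : P *ᵥ x = μ • x) : |μ| ≤ 1 := by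
  obtain ⟨i₁, hi₁⟩ := Function.ne_iff.mp hx
  obtain ⟨i₀, -, hmax⟩ := Finset.exists_max_image Finset.univ (fun i => |x i|)
    ⟨i₁, Finset.mem_univ i₁⟩
  have hpos : 0 < |x i₀| := lt_of_lt_of_le (abs_pos.mpr hi₁) (hmax i₁ (Finset.mem_univ i₁))
  have key : |μ| * |x i₀| ≤ |x i₀| := by
    have h0 : (P *ᵥ x) i₀ = μ * x i₀ := congrFun h i₀
    calc |μ| * |x i₀| = |(P *ᵥ x) i₀| := by rw [h0, abs_mul]
      _ = |∑ j, P i₀ j * x j| := by simp [Matrix.mulVec, dotProduct]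
      _ ≤ ∑ j, |P i₀ j * x j| := Finset.abs_sum_le_sum_abs _ _
      _ = ∑ j, P i₀ j * |x j| := by
          refine Finset.sum_congr rfl fun j _ => ?_
          rw [abs_mul, abs_of_nonneg (hP.1 i₀ j)]
      _ ≤ ∑ j, P i₀ j * |x i₀| :=
          Finset.sum_le_sum fun j _ =>
            mul_le_mul_of_nonneg_left (hmax j (Finset.mem_univ j)) (hP.1 i₀ j)
      _ = |x i₀| := by rw [← Finset.sum_mul, hP.2 i₀, one_mul]
  nlinarith

lemma isRoot_charpoly_iff {M : Matrix (Fin d) (Fin d) ℝ} {μ : ℝ} :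
    M.charpoly.IsRoot μ ↔ ∃ x : Fin d → ℝ, x ≠ 0 ∧ M *ᵥ x = μ • x := by
  have heval : M.charpoly.eval μ = (Matrix.diagonal (fun _ : Fin d => μ) - M).det := by
    rw [Matrix.charpoly, ← Polynomial.coe_evalRingHom, RingHom.map_det]
    congr 1
    ext i j
    by_cases h : i = j <;>
      simp [Matrix.charmatrix_apply, h, Matrix.diagonal_apply, Matrix.sub_apply]
  have hvec : ∀ x : Fin d → ℝ,
      ((Matrix.diagonal (fun _ : Fin d => μ) - M) *ᵥ x = 0) ↔ M *ᵥ x = μ • x := by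
    intro x
    rw [Matrix.sub_mulVec, sub_eq_zero]
    have hdiag : (Matrix.diagonal (fun _ : Fin d => μ)) *ᵥ x = μ • x := by
      funext j; rw [Matrix.mulVec_diagonal]; rfl
    rw [hdiag]
    exact eq_comm
  rw [Polynomial.IsRoot, heval, ← Matrix.exists_mulVec_eq_zero_iff]
  constructor
  · rintro ⟨x, hx0, hx⟩; exact ⟨x, hx0, (hvec x).mp hx⟩
  · rintro ⟨x, hx0, hx⟩; exact ⟨x, hx0, (hvec x).mpr hx⟩

lemma pow_mulVec_eig {M : Matrix (Fin d) (Fin d) ℝ} {μ : ℝ} {x : Fin d → ℝ}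
    (h : M *ᵥ x = μ • x) (m : ℕ) : (M ^ m) *ᵥ x = μ ^ m • x := by
  induction m with
  | zero => simp [Matrix.one_mulVec]
  | succ m ih =>
    rw [pow_succ', ← Matrix.mulVec_mulVec, ih, Matrix.mulVec_smul, h, smul_smul, ← pow_succ]

lemma lgen_eig_transport {w : Fin d → ℝ} {P : Matrix (Fin d) (Fin d) ℝ}
    (hw : ∀ i, 0 < w i) {μ : ℝ} {x : Fin d → ℝ} (hx : x ≠ 0)
    (hSx : (Lgen w P) *ᵥ x = μ • x) :
    ∃ y : Fin d → ℝ, y ≠ 0 ∧ P *ᵥ y = μ • y ∧ ∀ j, x j = y j * Real.sqrt (w j) := by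
  have hwp : ∀ i, (0:ℝ) < Real.sqrt (w i) := fun i => Real.sqrt_pos.mpr (hw i)
  refine ⟨fun j => x j / Real.sqrt (w j), ?_, ?_, ?_⟩
  · intro h0
    apply hx
    funext j
    have h1 := congrFun h0 j
    rcases div_eq_zero_iff.mp h1 with h2 | h2
    · exact h2
    · exact absurd h2 (hwp j).ne'
  · funext i
    have h1 := congrFun hSx i
    have h2 : (Lgen w P *ᵥ x) i = Real.sqrt (w i) * ∑ j, P i j * (x j / Real.sqrt (w j)) := by
      show ∑ j, Lgen w P i j * x j = _
      rw [Finset.mul_sum]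
      refine Finset.sum_congr rfl fun j _ => ?_
      show Real.sqrt (w i) * P i j / Real.sqrt (w j) * x j = _
      field_simp
    rw [h2] at h1
    have h3 : (μ • x) i = Real.sqrt (w i) * (μ * (x i / Real.sqrt (w i))) := by
      rw [Pi.smul_apply, smul_eq_mul]
      field_simp
      rw [mul_div_assoc, div_self (hwp i).ne', mul_one]
    rw [h3] at h1
    have h4 := mul_left_cancel₀ (hwp i).ne' h1
    show ∑ j, P i j * (x j / Real.sqrt (w j)) = _
    rw [h4]
    rfl
  · intro j
    exact (div_mul_cancel₀ _ (hwp j).ne').symm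

lemma specNorm_nonneg (A : Matrix (Fin d) (Fin d) ℝ) : 0 ≤ specNorm A := norm_nonneg _

lemma specNorm_mul_le (A B : Matrix (Fin d) (Fin d) ℝ) :
    specNorm (A * B) ≤ specNorm A * specNorm B := by
  show ‖Matrix.toEuclideanCLM (𝕜 := ℝ) (A * B)‖ ≤ _
  rw [_root_.map_mul]
  exact norm_mul_le _ _

end AuxiliaryLemmas

/-- bias of the empirical doublet matrix. -/
theorem statement10 (d n : ℕ) (hn : 2 ≤ n) (P : Matrix (Fin d) (Fin d) ℝ)
    (w q : Fin d → ℝ)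
    (hP : IsStochastic P) (herg : IsErgodic P) (hst : IsStationary P w)
    (hrev : IsReversible P w) (hpos : ∀ i, 0 < w i) (hq : IsProbVec q) :
    specNorm (Matrix.of fun i j =>
        ((∑ t ∈ Finset.range (n - 1), (q ᵥ* (P ^ t)) i) / ((n : ℝ) - 1) * P i j
            - w i * P i j) / (Real.sqrt (w i) * Real.sqrt (w j))) ≤
      1 / (((n : ℝ) - 1) * absSpectralGap P * minEntry w) := by
  classical
  rcases Nat.eq_zero_or_pos d with hd0 | hd
  · subst hd0
    have hz : ∀ B : Matrix (Fin 0) (Fin 0) ℝ, specNorm B = 0 := by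
      intro B
      have hB : B = 0 := by ext i; exact Fin.elim0 i
      rw [hB]
      show ‖Matrix.toEuclideanCLM (𝕜 := ℝ) (0 : Matrix (Fin 0) (Fin 0) ℝ)‖ = 0
      rw [_root_.map_zero, norm_zero]
    have hm : minEntry w = 0 := by
      show (⨅ i, w i) = (0:ℝ)
      exact Real.iInf_of_isEmpty _
    rw [hm, mul_zero, div_zero]
    exact le_of_eq (hz _)
  · haveI : Nonempty (Fin d) := ⟨⟨0, hd⟩⟩
    have hn1 : (0:ℝ) < (n:ℝ) - 1 := by
      have h2 : (2:ℝ) ≤ (n:ℝ) := by exact_mod_cast hn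
      linarith
    have hbdd_w : BddBelow (Set.range w) := ⟨0, by rintro x ⟨i, rfl⟩; exact (hpos i).le⟩
    have hpm_le : ∀ i, minEntry w ≤ w i := fun i => ciInf_le hbdd_w i
    have hpm_pos : 0 < minEntry w := by
      obtain ⟨i₀, -, hmin⟩ := Finset.exists_min_image Finset.univ w ⟨⟨0, hd⟩, Finset.mem_univ _⟩
      exact lt_of_lt_of_le (hpos i₀) (le_ciInf fun i => hmin i (Finset.mem_univ i))
    have hwpos : ∀ i, (0:ℝ) < Real.sqrt (w i) := fun i => Real.sqrt_pos.mpr (hpos i)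
    have hww : ∀ i, Real.sqrt (w i) * Real.sqrt (w i) = w i :=
      fun i => Real.mul_self_sqrt (hpos i).le
    set Sset : Set ℝ := {x : ℝ | ∃ μ : ℝ, μ ≠ 1 ∧ P.charpoly.IsRoot μ ∧ x = |μ|} with hSsetdef
    set β : ℝ := sSup Sset with hβdef
    have hgap : absSpectralGap P = 1 - β := rfl
    have hub : ∀ x ∈ Sset, x ≤ 1 := by
      rintro x ⟨μ, hμ1, hroot, rfl⟩
      obtain ⟨y, hy0, hy⟩ := isRoot_charpoly_iff.mp hroot
      exact abs_eig_le_one hP hy0 hy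
    have hbddS : BddAbove Sset := ⟨1, hub⟩
    have hβ0 : 0 ≤ β := by
      rcases Set.eq_empty_or_nonempty Sset with he | hne
      · rw [hβdef, he, Real.sSup_empty]
      · obtain ⟨x, hx⟩ := hne
        have h1 : 0 ≤ x := by obtain ⟨μ, -, -, rfl⟩ := hx; exact abs_nonneg μ
        exact h1.trans (le_csSup hbddS hx)
    obtain ⟨k, hk⟩ := herg
    have hPk := hP.pow k
    have hone : ∀ y : Fin d → ℝ, P *ᵥ y = y → ∀ i j, y i = y j := by
      intro y hy
      have h1 : P *ᵥ y = (1:ℝ) • y := by rw [one_smul]; exact hy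
      have h2 : (P ^ k) *ᵥ y = y := by rw [pow_mulVec_eig h1 k, one_pow, one_smul]
      exact const_of_posStoch hPk.2 hk h2
    have hneg1 : ∀ x : Fin d → ℝ, P *ᵥ x = (-1 : ℝ) • x → x = 0 := by
      intro x hx
      have h2k : (P ^ (k + k)) *ᵥ x = x := by
        rw [pow_mulVec_eig hx (k + k), Even.neg_one_pow (Even.add_self k), one_smul]
      have hpos2 : ∀ i j, 0 < (P ^ (k + k)) i j := by
        have h3 := mul_pos_entries hk hk
        rwa [← pow_add] at h3
      have hconst := const_of_posStoch ((hP.pow (k + k)).2) hpos2 h2k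
      funext i
      have h4 : (P *ᵥ x) i = x i := by
        have h5 : ∀ j, x j = x i := fun j => hconst j i
        show ∑ j, P i j * x j = x i
        calc ∑ j, P i j * x j = ∑ j, P i j * x i :=
              Finset.sum_congr rfl fun j _ => by rw [h5 j]
          _ = x i := by rw [← Finset.sum_mul, hP.2 i, one_mul]
      have h6 : (P *ᵥ x) i = - x i := by rw [hx]; simp
      have h7 : x i = 0 := by linarith
      simpa using h7
    have hβ1 : β < 1 := by
      have hfin : Sset.Finite := by
        have h0 : P.charpoly ≠ 0 := (Matrix.charpoly_monic P).ne_zero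
        have hsub : Sset ⊆ abs '' {μ : ℝ | P.charpoly.IsRoot μ} := by
          rintro x ⟨μ, hμ1, hroot, rfl⟩
          exact ⟨μ, hroot, rfl⟩
        exact ((Polynomial.finite_setOf_isRoot h0).image _).subset hsub
      rcases Set.eq_empty_or_nonempty Sset with he | hne
      · rw [hβdef, he, Real.sSup_empty]; norm_num
      · have hmem : β ∈ Sset := by rw [hβdef]; exact hne.csSup_mem hfin
        obtain ⟨μ, hμ1, hroot, hx⟩ := hmem
        rw [hx]
        refine lt_of_le_of_ne (hub _ ⟨μ, hμ1, hroot, rfl⟩) ?_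
        intro habs
        rcases (abs_eq zero_le_one).mp habs with h | h
        · exact hμ1 h
        · obtain ⟨y, hy0, hy⟩ := isRoot_charpoly_iff.mp hroot
          rw [h] at hy
          exact hy0 (hneg1 y hy)
    have h1mβ : 0 < 1 - β := by linarith
    set S : Matrix (Fin d) (Fin d) ℝ := Lgen w P with hSdef
    have hSapp : ∀ i j, S i j = Real.sqrt (w i) * P i j / Real.sqrt (w j) := fun i j => rfl
    have hSherm : S.IsHermitian := by
      rw [Matrix.IsHermitian]
      ext i j
      rw [Matrix.conjTranspose_apply, star_trivial, hSapp, hSapp,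
        div_eq_div_iff (hwpos i).ne' (hwpos j).ne']
      linear_combination P j i * hww j - P i j * hww i - hrev i j
    have hSrow : ∀ i, ∑ l, S i l * Real.sqrt (w l) = Real.sqrt (w i) := by
      intro i
      calc ∑ l, S i l * Real.sqrt (w l) = ∑ l, Real.sqrt (w i) * P i l := by
            refine Finset.sum_congr rfl fun l _ => ?_
            rw [hSapp]
            exact div_mul_cancel₀ _ (hwpos l).ne'
        _ = Real.sqrt (w i) := by rw [← Finset.mul_sum, hP.2 i, mul_one]
    have hScol : ∀ j, ∑ i, Real.sqrt (w i) * S i j = Real.sqrt (w j) := by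
      intro j
      calc ∑ i, Real.sqrt (w i) * S i j = ∑ i, w i * P i j / Real.sqrt (w j) := by
            refine Finset.sum_congr rfl fun i _ => ?_
            rw [hSapp, ← mul_div_assoc, ← mul_assoc, hww i]
        _ = Real.sqrt (w j) := by
            rw [← Finset.sum_div, hst.2 j, Real.div_sqrt]
    have hv2 : ∑ i, Real.sqrt (w i) * Real.sqrt (w i) = 1 := by
      rw [Finset.sum_congr rfl fun i _ => hww i]
      exact hst.1.2
    set V : Matrix (Fin d) (Fin d) ℝ :=
      Matrix.of (fun i j => Real.sqrt (w i) * Real.sqrt (w j)) with hVdef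
    have hVapp : ∀ i j, V i j = Real.sqrt (w i) * Real.sqrt (w j) := fun i j => rfl
    have hVherm : V.IsHermitian := by
      rw [Matrix.IsHermitian]
      ext i j
      rw [Matrix.conjTranspose_apply, star_trivial, hVapp, hVapp, mul_comm]
    have hSV : S * V = V := by
      ext i j
      rw [Matrix.mul_apply, hVapp]
      calc ∑ l, S i l * V l j = (∑ l, S i l * Real.sqrt (w l)) * Real.sqrt (w j) := by
            rw [Finset.sum_mul]
            exact Finset.sum_congr rfl fun l _ => by rw [hVapp l j, mul_assoc]
        _ = Real.sqrt (w i) * Real.sqrt (w j) := by rw [hSrow]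
    have hVS : V * S = V := by
      ext i j
      rw [Matrix.mul_apply, hVapp]
      calc ∑ l, V i l * S l j = Real.sqrt (w i) * ∑ l, Real.sqrt (w l) * S l j := by
            rw [Finset.mul_sum]
            exact Finset.sum_congr rfl fun l _ => by rw [hVapp i l, mul_assoc]
        _ = Real.sqrt (w i) * Real.sqrt (w j) := by rw [hScol]
    have hVV : V * V = V := by
      ext i j
      rw [Matrix.mul_apply, hVapp]
      calc ∑ l, V i l * V l j
          = (Real.sqrt (w i) * Real.sqrt (w j)) * ∑ l, Real.sqrt (w l) * Real.sqrt (w l) := by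
            rw [Finset.mul_sum]
            refine Finset.sum_congr rfl fun l _ => ?_
            rw [hVapp i l, hVapp l j]
            ring
        _ = Real.sqrt (w i) * Real.sqrt (w j) := by rw [hv2, mul_one]
    set T : Matrix (Fin d) (Fin d) ℝ := S - V with hTdef
    have hTherm : T.IsHermitian := hSherm.sub hVherm
    have hSpowV : ∀ t : ℕ, S ^ t * V = V := by
      intro t
      induction t with
      | zero => rw [pow_zero, one_mul]
      | succ t ih => rw [pow_succ, mul_assoc, hSV, ih]
    have hTpow : ∀ t : ℕ, 1 ≤ t → T ^ t = S ^ t - V := by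
      intro t
      induction t with
      | zero => omega
      | succ t ih =>
        intro _
        rcases Nat.eq_zero_or_pos t with h0 | h1
        · subst h0
          rw [pow_one, pow_one]
        · rw [pow_succ, ih h1, pow_succ, hTdef, Matrix.sub_mul, Matrix.mul_sub,
            Matrix.mul_sub, hSpowV t, hVS, hVV]
          abel
    have hvT : ∀ j, ∑ i, Real.sqrt (w i) * T i j = 0 := by
      intro j
      have e1 : ∀ i, Real.sqrt (w i) * T i j
          = Real.sqrt (w i) * S i j - w i * Real.sqrt (w j) := by
        intro i
        rw [hTdef, Matrix.sub_apply, hVapp, mul_sub, ← mul_assoc, hww i]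
      rw [Finset.sum_congr rfl fun i _ => e1 i, Finset.sum_sub_distrib, hScol,
        ← Finset.sum_mul, hst.1.2, one_mul, sub_self]
    have hTeig : ∀ (μ : ℝ) (x : Fin d → ℝ), x ≠ 0 → T *ᵥ x = μ • x → |μ| ≤ β := by
      intro μ x hx hμx
      rcases eq_or_ne μ 0 with rfl | hμ0
      · simpa using hβ0
      have hdot : ∑ l, Real.sqrt (w l) * x l = 0 := by
        have h3 : ∑ l, Real.sqrt (w l) * ((T *ᵥ x) l) = 0 := by
          have e2 : ∀ l, Real.sqrt (w l) * ((T *ᵥ x) l)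
              = ∑ i, Real.sqrt (w l) * (T l i * x i) := by
            intro l
            show Real.sqrt (w l) * (∑ i, T l i * x i) = _
            rw [Finset.mul_sum]
          rw [Finset.sum_congr rfl fun l _ => e2 l, Finset.sum_comm]
          have e3 : ∀ i, ∑ l, Real.sqrt (w l) * (T l i * x i)
              = (∑ l, Real.sqrt (w l) * T l i) * x i := by
            intro i
            rw [Finset.sum_mul]
            exact Finset.sum_congr rfl fun l _ => by ring
          rw [Finset.sum_congr rfl fun i _ => e3 i]
          simp [hvT]
        have h2 : ∑ l, Real.sqrt (w l) * ((μ • x) l) = μ * ∑ l, Real.sqrt (w l) * x l := by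
          rw [Finset.mul_sum]
          refine Finset.sum_congr rfl fun l _ => ?_
          rw [Pi.smul_apply, smul_eq_mul]
          ring
        rw [hμx, h2] at h3
        exact (mul_eq_zero.mp h3).resolve_left hμ0
      have hSx : S *ᵥ x = μ • x := by
        have hV0 : V *ᵥ x = 0 := by
          funext i
          show ∑ l, V i l * x l = 0
          calc ∑ l, V i l * x l = Real.sqrt (w i) * ∑ l, Real.sqrt (w l) * x l := by
                rw [Finset.mul_sum]
                exact Finset.sum_congr rfl fun l _ => by rw [hVapp i l]; ring
            _ = 0 := by rw [hdot, mul_zero]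
        rw [hTdef, Matrix.sub_mulVec, hV0, sub_zero] at hμx
        exact hμx
      rw [hSdef] at hSx
      obtain ⟨y, hy0, hPy, hxy⟩ := lgen_eig_transport hpos hx hSx
      rcases eq_or_ne μ 1 with rfl | hμ1
      · exfalso
        rw [one_smul] at hPy
        have hconst := hone y hPy
        have hyc : ∀ j, y j = y ⟨0, hd⟩ := fun j => hconst j ⟨0, hd⟩
        have hcc : ∑ l, Real.sqrt (w l) * x l = y ⟨0, hd⟩ := by
          calc ∑ l, Real.sqrt (w l) * x l = ∑ l, y ⟨0, hd⟩ * w l := by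
                refine Finset.sum_congr rfl fun l _ => ?_
                rw [hxy l, hyc l]
                linear_combination y ⟨0, hd⟩ * hww l
            _ = y ⟨0, hd⟩ := by rw [← Finset.mul_sum, hst.1.2, mul_one]
        have hc0 : y ⟨0, hd⟩ = 0 := by rw [← hcc, hdot]
        apply hy0
        funext j
        rw [hyc j, hc0]
        rfl
      · exact le_csSup hbddS ⟨μ, hμ1, isRoot_charpoly_iff.mpr ⟨y, hy0, hPy⟩, rfl⟩
    have hSnorm : specNorm S ≤ 1 := by
      refine specNorm_le_of_eig hSherm zero_le_one ?_
      intro μ x hx hSx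
      rw [hSdef] at hSx
      obtain ⟨y, hy0, hPy, -⟩ := lgen_eig_transport hpos hx hSx
      exact abs_eig_le_one hP hy0 hPy
    set g : Fin d → ℝ := fun i => q i / Real.sqrt (w i) with hgdef
    have hga : ∀ i, g i = q i / Real.sqrt (w i) := fun i => rfl
    have claim1 : ∀ (t : ℕ) (j : Fin d), (q ᵥ* P ^ t) j = Real.sqrt (w j) * (g ᵥ* S ^ t) j := by
      intro t
      induction t with
      | zero =>
        intro j
        rw [pow_zero, pow_zero, Matrix.vecMul_one, Matrix.vecMul_one, hga j]
        field_simp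
        rw [mul_div_assoc, div_self (hwpos j).ne', mul_one]
      | succ t ih =>
        intro j
        rw [pow_succ, ← Matrix.vecMul_vecMul, pow_succ, ← Matrix.vecMul_vecMul]
        show ∑ i, (q ᵥ* P ^ t) i * P i j = Real.sqrt (w j) * ∑ i, (g ᵥ* S ^ t) i * S i j
        rw [Finset.mul_sum]
        refine Finset.sum_congr rfl fun i _ => ?_
        rw [ih i, hSapp i j]
        field_simp
        exact (mul_div_cancel_right₀ _ (hwpos j).ne').symm
    have claim2 : ∀ t : ℕ, (fun i => Real.sqrt (w i)) ᵥ* S ^ t = fun i => Real.sqrt (w i) := by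
      intro t
      induction t with
      | zero => rw [pow_zero, Matrix.vecMul_one]
      | succ t ih =>
        rw [pow_succ, ← Matrix.vecMul_vecMul, ih]
        funext j
        show ∑ i, Real.sqrt (w i) * S i j = Real.sqrt (w j)
        exact hScol j
    set u : Fin d → ℝ := fun i => g i - Real.sqrt (w i) with hudef
    have hua : ∀ i, u i = q i / Real.sqrt (w i) - Real.sqrt (w i) := fun i => rfl
    have huv : ∑ i, u i * Real.sqrt (w i) = 0 := by
      have e : ∀ i, u i * Real.sqrt (w i) = q i - w i := by
        intro i
        rw [hua i, sub_mul, div_mul_cancel₀ _ (hwpos i).ne', hww i]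
      rw [Finset.sum_congr rfl fun i _ => e i, Finset.sum_sub_distrib, hq.2, hst.1.2, sub_self]
    have hu2 : ∑ i, u i ^ 2 ≤ 1 / minEntry w := by
      have e : ∀ i, u i ^ 2 = q i ^ 2 / w i - 2 * q i + w i := by
        intro i
        have e1 : q i / Real.sqrt (w i) * Real.sqrt (w i) = q i :=
          div_mul_cancel₀ _ (hwpos i).ne'
        have e2 : Real.sqrt (w i) ^ 2 = w i := Real.sq_sqrt (hpos i).le
        have e3 : (q i / Real.sqrt (w i)) ^ 2 = q i ^ 2 / w i := by rw [div_pow, e2]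
        calc u i ^ 2 = (q i / Real.sqrt (w i)) ^ 2
              - 2 * (q i / Real.sqrt (w i) * Real.sqrt (w i)) + Real.sqrt (w i) ^ 2 := by
              rw [hua i]; ring
          _ = q i ^ 2 / w i - 2 * q i + w i := by rw [e1, e2, e3]
      have hsum : ∑ i, u i ^ 2 = (∑ i, q i ^ 2 / w i) - 1 := by
        rw [Finset.sum_congr rfl fun i _ => e i, Finset.sum_add_distrib,
          Finset.sum_sub_distrib, ← Finset.mul_sum, hq.2, hst.1.2]
        ring
      have hbound : ∑ i, q i ^ 2 / w i ≤ 1 / minEntry w := by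
        calc ∑ i, q i ^ 2 / w i ≤ ∑ i, q i / minEntry w := by
              refine Finset.sum_le_sum fun i _ => ?_
              have hq1 : q i ≤ 1 := by
                rw [← hq.2]
                exact Finset.single_le_sum (fun j _ => hq.1 j) (Finset.mem_univ i)
              have hqq : q i ^ 2 ≤ q i := by nlinarith [hq.1 i]
              calc q i ^ 2 / w i ≤ q i / w i := by
                    exact (div_le_div_iff_of_pos_right (hpos i)).mpr hqq
                _ ≤ q i / minEntry w :=
                    div_le_div_of_nonneg_left (hq.1 i) hpm_pos (hpm_le i)
          _ = 1 / minEntry w := by rw [← Finset.sum_div, hq.2]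
      linarith
    have claim3 : ∀ t : ℕ, u ᵥ* S ^ t = (T ^ t) *ᵥ u := by
      intro t
      have hherm : (T ^ t).IsHermitian := hTherm.pow t
      have htrans' : (T ^ t)ᵀ = T ^ t := by
        ext i j
        have h1 := congrFun (congrFun hherm i) j
        rw [Matrix.conjTranspose_apply, star_trivial] at h1
        rw [Matrix.transpose_apply]
        exact h1
      have hsym : u ᵥ* T ^ t = (T ^ t) *ᵥ u := by
        conv_rhs => rw [← htrans']
        rw [Matrix.mulVec_transpose]
      rcases Nat.eq_zero_or_pos t with h0 | h1
      · subst h0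
        rw [pow_zero, pow_zero, Matrix.vecMul_one, Matrix.one_mulVec]
      · rw [← hsym]
        have hS2 : S ^ t = T ^ t + V := by
          rw [hTpow t h1]
          abel
        rw [hS2, Matrix.vecMul_add]
        have huV : u ᵥ* V = 0 := by
          funext j
          show ∑ i, u i * V i j = 0
          calc ∑ i, u i * V i j = (∑ i, u i * Real.sqrt (w i)) * Real.sqrt (w j) := by
                rw [Finset.sum_mul]
                exact Finset.sum_congr rfl fun i _ => by rw [hVapp i j]; ring
            _ = 0 := by rw [huv, zero_mul]
        rw [huV, add_zero]
    have hkey : ∀ (t : ℕ) (j : Fin d), (q ᵥ* P ^ t) j - w j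
        = Real.sqrt (w j) * ((T ^ t *ᵥ u) j) := by
      intro t j
      have hgv : g = fun i => u i + Real.sqrt (w i) := by
        funext i
        rw [hua i]
        ring
      have e0 : (u + fun i => Real.sqrt (w i)) ᵥ* S ^ t
          = u ᵥ* S ^ t + (fun i => Real.sqrt (w i)) ᵥ* S ^ t := Matrix.add_vecMul _ _ _
      have e1 : (g ᵥ* S ^ t) j = (T ^ t *ᵥ u) j + Real.sqrt (w j) := by
        calc (g ᵥ* S ^ t) j = ((u + fun i => Real.sqrt (w i)) ᵥ* S ^ t) j := by rw [hgv]; rfl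
          _ = (u ᵥ* S ^ t) j + ((fun i => Real.sqrt (w i)) ᵥ* S ^ t) j := by rw [e0]; rfl
          _ = (T ^ t *ᵥ u) j + Real.sqrt (w j) := by rw [claim3 t, claim2 t]
      rw [claim1 t j, e1]
      linear_combination hww j
    have hentry : ∀ (t : ℕ) (j : Fin d), |(q ᵥ* P ^ t) j - w j|
        ≤ Real.sqrt (w j) * (β ^ t * Real.sqrt (1 / minEntry w)) := by
      intro t j
      rw [hkey t j, abs_mul, abs_of_nonneg (Real.sqrt_nonneg (w j))]
      refine mul_le_mul_of_nonneg_left ?_ (Real.sqrt_nonneg _)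
      have hsq : ((T ^ t *ᵥ u) j) ^ 2 ≤ (β ^ 2) ^ t * (1 / minEntry w) := by
        have h1 : ((T ^ t *ᵥ u) j) ^ 2 ≤ ∑ l, ((T ^ t *ᵥ u) l) ^ 2 :=
          Finset.single_le_sum (f := fun l => ((T ^ t *ᵥ u) l) ^ 2)
            (fun l _ => sq_nonneg _) (Finset.mem_univ j)
        have h2 := mulVec_pow_sq_sum_le hTherm hβ0 hTeig u t
        have h3 : (β ^ 2) ^ t * ∑ i, u i ^ 2 ≤ (β ^ 2) ^ t * (1 / minEntry w) :=
          mul_le_mul_of_nonneg_left hu2 (by positivity)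
        linarith
      calc |(T ^ t *ᵥ u) j| = Real.sqrt (((T ^ t *ᵥ u) j) ^ 2) := (Real.sqrt_sq_eq_abs _).symm
        _ ≤ Real.sqrt ((β ^ 2) ^ t * (1 / minEntry w)) := Real.sqrt_le_sqrt hsq
        _ = β ^ t * Real.sqrt (1 / minEntry w) := by
            rw [Real.sqrt_mul (by positivity) _, ← pow_mul, mul_comm 2 t, pow_mul,
              Real.sqrt_sq (pow_nonneg hβ0 t)]
    have hgeom : ∑ t ∈ Finset.range (n - 1), β ^ t ≤ 1 / (1 - β) := by
      have h1 := geom_sum_Ico_le_of_lt_one hβ0 hβ1 (m := 0) (n := n - 1)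
      simpa [← Finset.range_eq_Ico] using h1
    set r : Fin d → ℝ := fun i =>
      ((∑ t ∈ Finset.range (n - 1), (q ᵥ* (P ^ t)) i) / ((n : ℝ) - 1) - w i) / w i with hrdef
    have hra : ∀ i, r i
        = ((∑ t ∈ Finset.range (n - 1), (q ᵥ* (P ^ t)) i) / ((n : ℝ) - 1) - w i) / w i :=
      fun i => rfl
    have hAfact : (Matrix.of fun i j =>
        ((∑ t ∈ Finset.range (n - 1), (q ᵥ* (P ^ t)) i) / ((n : ℝ) - 1) * P i j
            - w i * P i j) / (Real.sqrt (w i) * Real.sqrt (w j)))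
        = Matrix.diagonal r * S := by
      ext i j
      rw [Matrix.diagonal_mul, Matrix.of_apply, hra i, hSapp i j]
      have hne1 : Real.sqrt (w i) ≠ 0 := (hwpos i).ne'
      have hne2 : Real.sqrt (w j) ≠ 0 := (hwpos j).ne'
      have hne3 : w i ≠ 0 := (hpos i).ne'
      rw [← hww i]
      field_simp
      rw [Real.sqrt_sq (hwpos i).le]
      ring
    have hrbound : ∀ i, |r i| ≤ 1 / (((n : ℝ) - 1) * (1 - β) * minEntry w) := by
      intro i
      set C := Real.sqrt (1 / minEntry w) with hCdef
      have hC0 : 0 ≤ C := Real.sqrt_nonneg _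
      have hnum : r i = (∑ t ∈ Finset.range (n - 1), ((q ᵥ* P ^ t) i - w i))
          / (((n : ℝ) - 1) * w i) := by
        rw [hra i, Finset.sum_sub_distrib, Finset.sum_const, Finset.card_range]
        have h1n : 1 ≤ n := by omega
        rw [nsmul_eq_mul, Nat.cast_sub h1n, Nat.cast_one]
        field_simp
      have habs : |r i| = |∑ t ∈ Finset.range (n - 1), ((q ᵥ* P ^ t) i - w i)|
          / (((n : ℝ) - 1) * w i) := by
        rw [hnum, abs_div, abs_of_pos (mul_pos hn1 (hpos i))]
      have hsumb : |∑ t ∈ Finset.range (n - 1), ((q ᵥ* P ^ t) i - w i)|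
          ≤ Real.sqrt (w i) * C * (1 / (1 - β)) := by
        calc |∑ t ∈ Finset.range (n - 1), ((q ᵥ* P ^ t) i - w i)|
            ≤ ∑ t ∈ Finset.range (n - 1), |(q ᵥ* P ^ t) i - w i| :=
              Finset.abs_sum_le_sum_abs _ _
          _ ≤ ∑ t ∈ Finset.range (n - 1), Real.sqrt (w i) * C * β ^ t := by
              refine Finset.sum_le_sum fun t _ => ?_
              calc |(q ᵥ* P ^ t) i - w i| ≤ Real.sqrt (w i) * (β ^ t * C) := hentry t i
                _ = Real.sqrt (w i) * C * β ^ t := by ring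
          _ = Real.sqrt (w i) * C * ∑ t ∈ Finset.range (n - 1), β ^ t := by
              rw [← Finset.mul_sum]
          _ ≤ Real.sqrt (w i) * C * (1 / (1 - β)) :=
              mul_le_mul_of_nonneg_left hgeom (by positivity)
      have hfin2 : Real.sqrt (w i) * C * (1 / (1 - β)) / (((n : ℝ) - 1) * w i)
          ≤ 1 / (((n : ℝ) - 1) * (1 - β) * minEntry w) := by
        have hC2 : Real.sqrt (w i) * C * minEntry w ≤ w i := by
          have e1 : C = 1 / Real.sqrt (minEntry w) := by
            rw [hCdef, one_div, Real.sqrt_inv, one_div]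
          calc Real.sqrt (w i) * C * minEntry w
              = Real.sqrt (w i) * (minEntry w / Real.sqrt (minEntry w)) := by rw [e1]; ring
            _ = Real.sqrt (w i) * Real.sqrt (minEntry w) := by rw [Real.div_sqrt]
            _ ≤ Real.sqrt (w i) * Real.sqrt (w i) :=
                mul_le_mul_of_nonneg_left (Real.sqrt_le_sqrt (hpm_le i)) (Real.sqrt_nonneg _)
            _ = w i := hww i
        rw [div_le_div_iff₀ (mul_pos hn1 (hpos i)) (mul_pos (mul_pos hn1 h1mβ) hpm_pos)]
        have expand : Real.sqrt (w i) * C * (1 / (1 - β)) * (((n:ℝ) - 1) * (1 - β) * minEntry w)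
            = ((n:ℝ) - 1) * (Real.sqrt (w i) * C * minEntry w) := by
          field_simp
        rw [expand, one_mul]
        nlinarith [hC2, hn1]
      calc |r i| = |∑ t ∈ Finset.range (n - 1), ((q ᵥ* P ^ t) i - w i)|
            / (((n : ℝ) - 1) * w i) := habs
        _ ≤ Real.sqrt (w i) * C * (1 / (1 - β)) / (((n : ℝ) - 1) * w i) := by
            exact (div_le_div_iff_of_pos_right (mul_pos hn1 (hpos i))).mpr hsumb
        _ ≤ 1 / (((n : ℝ) - 1) * (1 - β) * minEntry w) := hfin2
    have hrc0 : (0:ℝ) ≤ 1 / (((n : ℝ) - 1) * (1 - β) * minEntry w) :=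
      (one_div_pos.mpr (mul_pos (mul_pos hn1 h1mβ) hpm_pos)).le
    have hdiag : specNorm (Matrix.diagonal r) ≤ 1 / (((n : ℝ) - 1) * (1 - β) * minEntry w) := by
      refine specNorm_le_of_eig (Matrix.isHermitian_diagonal r) hrc0 ?_
      intro μ x hx hdx
      obtain ⟨i, hi⟩ := Function.ne_iff.mp hx
      have h1 := congrFun hdx i
      rw [Matrix.mulVec_diagonal] at h1
      have h2 : (μ • x) i = μ * x i := rfl
      rw [h2] at h1
      have hμ : r i = μ := mul_right_cancel₀ hi h1
      rw [← hμ]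
      exact hrbound i
    have hmul : specNorm (Matrix.diagonal r * S)
        ≤ specNorm (Matrix.diagonal r) * specNorm S := specNorm_mul_le _ _
    have hfinal : specNorm (Matrix.diagonal r * S)
        ≤ 1 / (((n : ℝ) - 1) * (1 - β) * minEntry w) := by
      calc specNorm (Matrix.diagonal r * S)
          ≤ specNorm (Matrix.diagonal r) * specNorm S := hmul
        _ ≤ (1 / (((n : ℝ) - 1) * (1 - β) * minEntry w)) * 1 :=
            mul_le_mul hdiag hSnorm (specNorm_nonneg _) hrc0
        _ = 1 / (((n : ℝ) - 1) * (1 - β) * minEntry w) := mul_one _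
    rw [hAfact, hgap]
    exact hfinal


end MCEst
end

section
/- Let (Y_t)_{t∈ℕ} be a martingale difference sequence with respect to a filtration F_0 ⊂ F_1 ⊂ F_2 ⊂ ..., with |Y_t| ≤ b almost surely for all t, and set S_k = Σ_{t=1}^k Y_t and V_k = Σ_{t=1}^k E[Y_t² | F_{t−1}]. Then for any n ≥ 1, x > 0, and c > 1: Pr[ ∃ k ∈ [n] such that S_k > sqrt(2 c V_k x) + 4bx/3 ] ≤ ( 1 + ⌈log_c(2n/x)⌉₊ ) · e^{−x}, where ⌈z⌉₊ = max{0, ⌈z⌉}. -/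
open Finset Matrix Real MeasureTheory
open scoped Classical BigOperators

namespace MCEst

lemma fact_ge (n : ℕ) : 2 * 3 ^ n ≤ Nat.factorial (n + 2) := by
  induction n with
  | zero => simp [Nat.factorial]
  | succ k ih =>
    have h3 : (3:ℕ) ≤ k + 3 := by omega
    calc 2 * 3 ^ (k+1) = 3 * (2 * 3 ^ k) := by ring
    _ ≤ (k + 3) * (2 * 3 ^ k) := Nat.mul_le_mul_right _ h3
    _ ≤ (k + 3) * Nat.factorial (k + 2) := Nat.mul_le_mul_left _ ih
    _ = Nat.factorial (k + 1 + 2) := by simp [Nat.factorial_succ]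

lemma exp_remainder (x : ℝ) :
    Real.exp x - 1 - x = ∑' n : ℕ, x ^ (n + 2) / (Nat.factorial (n + 2) : ℝ) := by
  have h : Summable (fun n : ℕ => x ^ n / (Nat.factorial n : ℝ)) := Real.summable_pow_div_factorial x
  have h1 : Summable (fun n : ℕ => x ^ (n + 1) / (Nat.factorial (n + 1) : ℝ)) := (summable_nat_add_iff 1).2 h
  have e0 : Real.exp x = ∑' n : ℕ, x ^ n / (Nat.factorial n : ℝ) := by
    rw [Real.exp_eq_exp_ℝ, NormedSpace.exp_eq_tsum_div]
  rw [e0, Summable.tsum_eq_zero_add h]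
  have : ∑' n : ℕ, x ^ (n + 1) / (Nat.factorial (n + 1) : ℝ) = x + ∑' n : ℕ, x ^ (n + 2) / (Nat.factorial (n + 2) : ℝ) := by
    rw [Summable.tsum_eq_zero_add h1]; norm_num [Nat.factorial]
  rw [this]; norm_num [Nat.factorial]

lemma summable_remainder (x : ℝ) : Summable (fun n : ℕ => x ^ (n + 2) / (Nat.factorial (n + 2) : ℝ)) :=
  (summable_nat_add_iff 2).2 (Real.summable_pow_div_factorial x)

lemma exp_le_bernstein {u : ℝ} (hu0 : 0 ≤ u) (hu3 : u < 3) :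
    Real.exp u ≤ 1 + u + u ^ 2 / (2 * (1 - u / 3)) := by
  have h13 : (0:ℝ) < 1 - u / 3 := by linarith
  have hterm : ∀ n : ℕ, u ^ (n + 2) / (Nat.factorial (n + 2) : ℝ) ≤ u ^ 2 / 2 * (u / 3) ^ n := by
    intro n
    have hfac : (2 * 3 ^ n : ℝ) ≤ Nat.factorial (n + 2) := by exact_mod_cast fact_ge n
    have h2 : (0:ℝ) < 2 * 3 ^ n := by positivity
    have := div_le_div_of_nonneg_left (pow_nonneg hu0 (n + 2)) h2 hfac
    calc u ^ (n + 2) / (Nat.factorial (n + 2) : ℝ) ≤ u ^ (n + 2) / (2 * 3 ^ n) := this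
    _ = u ^ 2 / 2 * (u / 3) ^ n := by
        rw [div_pow, pow_add]; ring
  have hgeo : Summable (fun n : ℕ => u ^ 2 / 2 * (u / 3) ^ n) := by
    apply Summable.mul_left
    exact summable_geometric_of_lt_one (by positivity) (by linarith)
  have hsum := Summable.tsum_le_tsum hterm (summable_remainder u) hgeo
  rw [← exp_remainder] at hsum
  rw [tsum_mul_left, tsum_geometric_of_lt_one (by positivity) (by linarith)] at hsum
  have : u ^ 2 / 2 * (1 - u / 3)⁻¹ = u ^ 2 / (2 * (1 - u / 3)) := by
    field_simp
  linarith [hsum, this ▸ hsum]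

lemma mgf_poly {v w : ℝ} (h : |v| ≤ w) :
    Real.exp v ≤ 1 + v + (Real.exp w - 1 - w) * v ^ 2 / w ^ 2 := by
  rcases eq_or_lt_of_le ((abs_nonneg v).trans h) with hw | hw
  · have hv : v = 0 := by
      have := abs_nonpos_iff.1 (h.trans hw.symm.le)
      simpa using this
    simp [hv, ← hw]
  · have hterm : ∀ n : ℕ, v ^ (n + 2) / (Nat.factorial (n + 2) : ℝ) ≤ w ^ (n + 2) / (Nat.factorial (n + 2) : ℝ) * (v ^ 2 / w ^ 2) := by
      intro n
      have hfp : (0:ℝ) < (Nat.factorial (n + 2) : ℝ) := by exact_mod_cast Nat.factorial_pos (n+2)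
      rw [div_mul_eq_mul_div, div_le_div_iff_of_pos_right hfp]
      have h1 : v ^ (n + 2) ≤ |v| ^ (n + 2) := le_abs_self _ |>.trans (by rw [abs_pow])
      have h2 : |v| ^ (n + 2) = |v| ^ n * v ^ 2 := by
        rw [pow_add, sq_abs]
      have h3 : |v| ^ n ≤ w ^ n := pow_le_pow_left₀ (abs_nonneg v) h n
      have h4 : w ^ (n + 2) * (v ^ 2 / w ^ 2) = w ^ n * v ^ 2 := by
        rw [pow_add]; field_simp
      rw [h4]
      calc v ^ (n + 2) ≤ |v| ^ n * v ^ 2 := by rw [← h2]; exact h1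
      _ ≤ w ^ n * v ^ 2 := by nlinarith [sq_nonneg v]
    have hsum := Summable.tsum_le_tsum hterm (summable_remainder v)
      ((summable_remainder w).mul_right _)
    rw [← exp_remainder, tsum_mul_right, ← exp_remainder] at hsum
    have : (Real.exp w - 1 - w) * (v ^ 2 / w ^ 2) = (Real.exp w - 1 - w) * v ^ 2 / w ^ 2 := by
      ring
    linarith [hsum]

lemma exp_six_fifths : Real.exp (6 / 5 : ℝ) ≤ 17 / 5 := by
  have h1 : Real.exp 1 ≤ 2.7182818286 := Real.exp_one_lt_d9.le
  have h5 : Real.exp (6 / 5 : ℝ) ^ 5 = Real.exp 1 ^ 6 := by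
    rw [← Real.exp_nat_mul, ← Real.exp_nat_mul]; norm_num
  have h6 : Real.exp 1 ^ 6 ≤ 2.7182818286 ^ 6 :=
    pow_le_pow_left₀ (Real.exp_pos 1).le h1 6
  have h7 : (2.7182818286:ℝ) ^ 6 ≤ (17 / 5) ^ 5 := by norm_num
  have : Real.exp (6 / 5 : ℝ) ^ 5 ≤ (17 / 5) ^ 5 := by
    rw [h5]; linarith
  exact le_of_pow_le_pow_left₀ (by norm_num) (by norm_num) this


lemma bucket0_alg {b x : ℝ} (hb : 0 < b) (hx : 0 < x) :
    (Real.exp (6 / (5 * b) * b) - 1 - 6 / (5 * b) * b) / b ^ 2 * (b ^ 2 * x / 2)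
      - 6 / (5 * b) * (4 * b * x / 3) ≤ -x := by
  have hbne : b ≠ 0 := hb.ne'
  have h1 : 6 / (5 * b) * b = 6 / 5 := by field_simp
  rw [h1]
  have h2 : (Real.exp (6 / 5) - 1 - 6 / 5) / b ^ 2 * (b ^ 2 * x / 2)
      = (Real.exp (6 / 5) - 1 - 6 / 5) * x / 2 := by
    field_simp
  have h3 : 6 / (5 * b) * (4 * b * x / 3) = 8 * x / 5 := by
    field_simp
    ring
  rw [h2, h3]
  nlinarith [exp_six_fifths, hx]

lemma bucketj_core {b x v s a D l : ℝ} (hb : 0 < b) (hx : 0 < x) (hv : 0 < v)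
    (hs0 : 0 ≤ s) (hs2 : s ^ 2 = 2 * v * x) (ha : a = s + 4 * b * x / 3)
    (hD : D = v + a * b / 3) (hl : l = a / D) :
    (Real.exp (l * b) - 1 - l * b) / b ^ 2 * v - l * a ≤ -x := by
  have ha0 : 0 < a := by rw [ha]; positivity
  have hD0 : 0 < D := by rw [hD]; positivity
  have hl0 : 0 ≤ l := by rw [hl]; exact (div_pos ha0 hD0).le
  have hub : l * b < 3 := by
    rw [hl, div_mul_eq_mul_div, div_lt_iff₀ hD0, hD]
    linarith [mul_pos ha0 hb]
  have h13 : 0 < 1 - l * b / 3 := by linarith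
  have hkey : Real.exp (l * b) - 1 - l * b ≤ (l * b) ^ 2 / (2 * (1 - l * b / 3)) := by
    linarith [exp_le_bernstein (mul_nonneg hl0 hb.le) hub]
  have e1 : 1 - l * b / 3 = v / D := by
    rw [hl]
    field_simp
    rw [hD]
    ring
  have hT : (l * b) ^ 2 / (2 * (1 - l * b / 3)) / b ^ 2 * v - l * a = -(a ^ 2 / (2 * D)) := by
    rw [e1, hl]
    field_simp
    ring
  have hlast : -(a ^ 2 / (2 * D)) ≤ -x := by
    rw [neg_le_neg_iff, le_div_iff₀ (by positivity)]
    rw [ha, hD, ha]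
    nlinarith [hs2, hs0, mul_nonneg (mul_nonneg hb.le hx.le) hs0]
  calc (Real.exp (l * b) - 1 - l * b) / b ^ 2 * v - l * a
      ≤ (l * b) ^ 2 / (2 * (1 - l * b / 3)) / b ^ 2 * v - l * a := by gcongr
  _ = -(a ^ 2 / (2 * D)) := hT
  _ ≤ -x := hlast


lemma freedman_one {Ω : Type*} {m0 : MeasurableSpace Ω} {μ : MeasureTheory.Measure Ω}
    [MeasureTheory.IsProbabilityMeasure μ] (F : MeasureTheory.Filtration ℕ m0)
    (Y : ℕ → Ω → ℝ) (b : ℝ) (hb : 0 < b)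
    (hadapted : ∀ t, 1 ≤ t → StronglyMeasurable[F t] (Y t))
    (hmdiff : ∀ t, 1 ≤ t → μ[Y t | F (t - 1)] =ᵐ[μ] 0)
    (hbdd : ∀ t, 1 ≤ t → ∀ᵐ ω ∂μ, |Y t ω| ≤ b)
    (n : ℕ) (l a v : ℝ) (hl : 0 ≤ l) (hv : 0 ≤ v) :
    μ {ω | ∃ k ∈ Finset.Icc 1 n, a ≤ ∑ t ∈ Finset.Icc 1 k, Y t ω ∧
        (∑ t ∈ Finset.Icc 1 k, (μ[(Y t) ^ 2 | F (t - 1)]) ω) ≤ v} ≤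
      ENNReal.ofReal (Real.exp ((Real.exp (l * b) - 1 - l * b) / b ^ 2 * v - l * a)) := by
  classical
  rcases eq_or_lt_of_le hl with hl0 | hlpos
  · -- l = 0 : RHS = 1
    have : (Real.exp (l * b) - 1 - l * b) / b ^ 2 * v - l * a = 0 := by
      rw [← hl0]; simp
    rw [this]
    simp only [Real.exp_zero, ENNReal.ofReal_one]
    exact prob_le_one
  set φ : ℝ := (Real.exp (l * b) - 1 - l * b) / b ^ 2 with hφ
  have hφ0 : 0 ≤ φ := div_nonneg (by nlinarith [Real.add_one_le_exp (l * b)]) (sq_nonneg b)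
  set S : ℕ → Ω → ℝ := fun k ω => ∑ t ∈ Finset.Icc 1 k, Y t ω with hSdef
  set V : ℕ → Ω → ℝ := fun k ω => ∑ t ∈ Finset.Icc 1 k, (μ[(Y t) ^ 2 | F (t - 1)]) ω with hVdef
  set M : ℕ → Ω → ℝ := fun k ω => Real.exp (l * S k ω - φ * V k ω) with hMdef
  -- basic integrability facts
  have hYm : ∀ t, 1 ≤ t → AEStronglyMeasurable (Y t) μ := fun t ht =>
    ((hadapted t ht).mono (F.le t)).aestronglyMeasurable
  have hYint : ∀ t, 1 ≤ t → Integrable (Y t) μ := fun t ht => by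
    refine Integrable.mono' (integrable_const b) (hYm t ht) ?_
    filter_upwards [hbdd t ht] with ω h using by rwa [Real.norm_eq_abs]
  have hY2m : ∀ t, 1 ≤ t → StronglyMeasurable ((Y t) ^ 2) := by
    intro t ht
    have h := (hadapted t ht).mono (F.le t)
    have : (Y t) ^ 2 = fun ω => Y t ω * Y t ω := by funext ω; simp [pow_two]
    rw [this]; exact h.mul h
  have hY2int : ∀ t, 1 ≤ t → Integrable ((Y t) ^ 2) μ := fun t ht => by
    refine Integrable.mono' (integrable_const (b ^ 2)) (hY2m t ht).aestronglyMeasurable ?_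
    filter_upwards [hbdd t ht] with ω h
    have : |Y t ω| ^ 2 ≤ b ^ 2 := pow_le_pow_left₀ (abs_nonneg _) h 2
    rw [Real.norm_eq_abs]
    calc |((Y t) ^ 2) ω| = |Y t ω| ^ 2 := by simp [Pi.pow_apply, abs_pow]
    _ ≤ b ^ 2 := this
  have hcondnn : ∀ t : ℕ, (0 : Ω → ℝ) ≤ᵐ[μ] μ[(Y t) ^ 2 | F (t - 1)] := fun t =>
    condExp_nonneg (ae_of_all _ fun ω => sq_nonneg _)
  have hVnn : ∀ k, ∀ᵐ ω ∂μ, 0 ≤ V k ω := by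
    intro k
    have h : ∀ᵐ ω ∂μ, ∀ t, t ∈ Finset.Icc 1 k → 0 ≤ (μ[(Y t) ^ 2 | F (t - 1)]) ω := by
      rw [MeasureTheory.ae_all_iff]
      intro t
      filter_upwards [hcondnn t] with ω h _
      exact h
    filter_upwards [h] with ω h using Finset.sum_nonneg h
  have hSub : ∀ k, ∀ᵐ ω ∂μ, S k ω ≤ k * b := by
    intro k
    have h : ∀ᵐ ω ∂μ, ∀ t, t ∈ Finset.Icc 1 k → Y t ω ≤ b := by
      rw [MeasureTheory.ae_all_iff]
      intro t
      by_cases ht : 1 ≤ t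
      · filter_upwards [hbdd t ht] with ω h _ using (abs_le.1 h).2
      · exact ae_of_all _ fun ω htt => absurd (Finset.mem_Icc.1 htt).1 ht
    filter_upwards [h] with ω h
    calc S k ω ≤ ∑ _t ∈ Finset.Icc 1 k, b := Finset.sum_le_sum h
    _ = (k : ℝ) * b := by simp [Nat.card_Icc]
  have hSm : ∀ k, StronglyMeasurable[F k] (S k) := fun k =>
    Finset.stronglyMeasurable_fun_sum _ fun t ht =>
      (hadapted t (Finset.mem_Icc.1 ht).1).mono (F.mono (Finset.mem_Icc.1 ht).2)
  have hVm : ∀ k, StronglyMeasurable[F k] (V k) := fun k =>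
    Finset.stronglyMeasurable_fun_sum _ fun t ht =>
      stronglyMeasurable_condExp.mono (F.mono ((Nat.sub_le t 1).trans (Finset.mem_Icc.1 ht).2))
  have hMm : ∀ k, StronglyMeasurable[F k] (M k) := fun k =>
    Real.continuous_exp.comp_stronglyMeasurable
      (((hSm k).const_mul l).sub ((hVm k).const_mul φ))
  have hMb : ∀ k, ∀ᵐ ω ∂μ, M k ω ≤ Real.exp (l * (k * b)) := by
    intro k
    filter_upwards [hSub k, hVnn k] with ω h1 h2
    apply Real.exp_le_exp.2
    nlinarith [mul_nonneg hφ0 h2, mul_le_mul_of_nonneg_left h1 hl]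
  have hMint : ∀ k, Integrable (M k) μ := fun k => by
    refine Integrable.mono' (integrable_const (Real.exp (l * (k * b))))
      ((hMm k).mono (F.le k)).aestronglyMeasurable ?_
    filter_upwards [hMb k] with ω h
    rwa [Real.norm_eq_abs, abs_of_pos (Real.exp_pos _)]
  -- the supermartingale step
  have hstep : ∀ k, μ[M (k + 1) | F k] ≤ᵐ[μ] M k := by
    intro k
    have hk1 : (1 : ℕ) ≤ k + 1 := Nat.succ_le_succ (Nat.zero_le k)
    set g : Ω → ℝ := μ[(Y (k + 1)) ^ 2 | F k] with hgdef
    have hSsucc : ∀ ω, S (k + 1) ω = S k ω + Y (k + 1) ω := fun ω =>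
      Finset.sum_Icc_succ_top hk1 _
    have hVsucc : ∀ ω, V (k + 1) ω = V k ω + g ω := by
      intro ω
      have h := Finset.sum_Icc_succ_top hk1 (fun t => (μ[(Y t) ^ 2 | F (t - 1)]) ω)
      simpa [hVdef, hgdef, Nat.add_sub_cancel] using h
    set W : Ω → ℝ := fun ω => M k ω * Real.exp (-(φ * g ω)) with hWdef
    set E : Ω → ℝ := fun ω => Real.exp (l * Y (k + 1) ω) with hEdef
    have hME : M (k + 1) = fun ω => W ω * E ω := by
      funext ω
      simp only [hMdef, hWdef, hEdef, hSsucc, hVsucc]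
      rw [← Real.exp_add, ← Real.exp_add]
      congr 1
      ring
    have hgm : StronglyMeasurable[F k] g := stronglyMeasurable_condExp
    have hgnn : (0 : Ω → ℝ) ≤ᵐ[μ] g := condExp_nonneg (ae_of_all _ fun ω => sq_nonneg _)
    have hWm : StronglyMeasurable[F k] W :=
      (hMm k).mul (Real.continuous_exp.comp_stronglyMeasurable ((hgm.const_mul φ).neg))
    have hWnn : ∀ ω, 0 ≤ W ω := fun ω =>
      mul_nonneg (Real.exp_pos _).le (Real.exp_pos _).le
    have hWb : ∀ᵐ ω ∂μ, W ω ≤ Real.exp (l * (k * b)) := by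
      filter_upwards [hMb k, hgnn] with ω h1 h2
      have h3 : Real.exp (-(φ * g ω)) ≤ 1 := by
        rw [Real.exp_le_one_iff]
        simp only [neg_nonpos]
        exact mul_nonneg hφ0 h2
      calc W ω ≤ M k ω * 1 := by
            apply mul_le_mul_of_nonneg_left h3 (Real.exp_pos _).le
      _ = M k ω := mul_one _
      _ ≤ _ := h1
    have hEm : AEStronglyMeasurable E μ :=
      (Real.continuous_exp.comp_stronglyMeasurable
        (((hadapted _ hk1).mono (F.le _)).const_mul l)).aestronglyMeasurable
    have hEb : ∀ᵐ ω ∂μ, E ω ≤ Real.exp (l * b) := by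
      filter_upwards [hbdd (k + 1) hk1] with ω h
      exact Real.exp_le_exp.2 (mul_le_mul_of_nonneg_left ((abs_le.1 h).2) hl)
    have hEint : Integrable E μ := by
      refine Integrable.mono' (integrable_const (Real.exp (l * b))) hEm ?_
      filter_upwards [hEb] with ω h
      rwa [Real.norm_eq_abs, abs_of_pos (Real.exp_pos _)]
    have hWEint : Integrable (fun ω => W ω * E ω) μ := by
      refine Integrable.mono'
        (integrable_const (Real.exp (l * (k * b)) * Real.exp (l * b)))
        (((hWm.mono (F.le k)).mul
          (Real.continuous_exp.comp_stronglyMeasurable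
            (((hadapted _ hk1).mono (F.le _)).const_mul l))).aestronglyMeasurable) ?_
      filter_upwards [hWb, hEb] with ω h1 h2
      rw [Real.norm_eq_abs, abs_of_nonneg (mul_nonneg (hWnn ω) (Real.exp_pos _).le)]
      exact mul_le_mul h1 h2 (Real.exp_pos _).le (Real.exp_pos _).le
    have hpull : μ[fun ω => W ω * E ω | F k] =ᵐ[μ] fun ω => W ω * (μ[E | F k]) ω := by
      have h := condExp_mul_of_stronglyMeasurable_left hWm hWEint hEint
      exact h
    have hcondE : μ[E | F k] ≤ᵐ[μ] fun ω => Real.exp (φ * g ω) := by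
      have hpoly : E ≤ᵐ[μ] fun ω => 1 + l * Y (k + 1) ω + φ * Y (k + 1) ω ^ 2 := by
        filter_upwards [hbdd (k + 1) hk1] with ω hy
        have h1 : |l * Y (k + 1) ω| ≤ l * b := by
          rw [abs_mul, abs_of_nonneg hl]
          exact mul_le_mul_of_nonneg_left hy hl
        have h2 := mgf_poly h1
        have h3 : (Real.exp (l * b) - 1 - l * b) * (l * Y (k + 1) ω) ^ 2 / (l * b) ^ 2
            = φ * Y (k + 1) ω ^ 2 := by
          rw [hφ]
          field_simp
        rw [h3] at h2
        exact h2
      have hRHSint : Integrable (fun ω => 1 + l * Y (k + 1) ω + φ * Y (k + 1) ω ^ 2) μ := by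
        refine Integrable.add (Integrable.add (integrable_const 1) ?_) ?_
        · exact (hYint _ hk1).const_mul l
        · exact ((hY2int _ hk1).const_mul φ)
      have hmono := condExp_mono (m := F k) hEint hRHSint hpoly
      have hsplit : μ[fun ω => 1 + l * Y (k + 1) ω + φ * Y (k + 1) ω ^ 2 | F k]
          =ᵐ[μ] fun ω => 1 + l * (μ[Y (k + 1) | F k]) ω + φ * g ω := by
        have e1 : (fun ω => 1 + l * Y (k + 1) ω + φ * Y (k + 1) ω ^ 2)
            = ((fun _ => (1 : ℝ)) + l • Y (k + 1)) + φ • ((Y (k + 1)) ^ 2) := by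
          funext ω
          simp [Pi.add_apply, Pi.smul_apply, smul_eq_mul]
        rw [e1]
        have i1 : Integrable ((fun _ => (1 : ℝ)) + l • Y (k + 1)) μ :=
          (integrable_const 1).add ((hYint _ hk1).smul l)
        have i2 : Integrable (φ • ((Y (k + 1)) ^ 2)) μ := (hY2int _ hk1).smul φ
        have c1 := condExp_add (μ := μ) (m := F k) i1 i2
        have c2 := condExp_add (μ := μ) (m := F k) (integrable_const (1:ℝ)) ((hYint _ hk1).smul l)
        have c3 := condExp_smul (μ := μ) (m := F k) l (Y (k + 1))
        have c4 := condExp_smul (μ := μ) (m := F k) φ ((Y (k + 1)) ^ 2)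
        have c5 : μ[(fun _ => (1:ℝ)) | F k] = fun _ => (1:ℝ) := condExp_const (F.le k) 1
        filter_upwards [c1, c2, c3, c4] with ω h1 h2 h3 h4
        rw [h1, Pi.add_apply, h2, Pi.add_apply, h3, h4, c5]
        simp [Pi.smul_apply, smul_eq_mul, hgdef]
      have hzero : μ[Y (k + 1) | F k] =ᵐ[μ] 0 := by
        have := hmdiff (k + 1) hk1
        simpa [Nat.add_sub_cancel] using this
      filter_upwards [hmono, hsplit, hzero, hgnn] with ω h1 h2 h3 h4
      rw [h2] at h1
      rw [h3] at h1
      have h5 : φ * g ω + 1 ≤ Real.exp (φ * g ω) := Real.add_one_le_exp _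
      simp only [Pi.zero_apply, mul_zero, add_zero] at h1
      linarith
    -- combine
    have hfinal : μ[M (k + 1) | F k] =ᵐ[μ] fun ω => W ω * (μ[E | F k]) ω := by
      rw [hME]
      exact hpull
    filter_upwards [hfinal, hcondE] with ω h1 h2
    rw [h1]
    calc W ω * (μ[E | F k]) ω ≤ W ω * Real.exp (φ * g ω) :=
          mul_le_mul_of_nonneg_left h2 (hWnn ω)
    _ = M k ω := by
        show M k ω * Real.exp (-(φ * g ω)) * Real.exp (φ * g ω) = M k ω
        rw [mul_assoc, ← Real.exp_add]
        simp
  -- supermartingale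
  have hsuper : Supermartingale M F μ := supermartingale_nat hMm hMint hstep
  set ε : ℝ := Real.exp (l * a - φ * v) with hεdef
  have hε : 0 < ε := Real.exp_pos _
  set τ : Ω → WithTop ℕ := fun ω => (hittingBtwn M (Set.Ici ε) 0 n ω : ℕ) with hτdef
  have hτ : IsStoppingTime F τ := hsuper.stronglyAdapted.adapted.isStoppingTime_hittingBtwn measurableSet_Ici
  have hτle : ∀ ω, τ ω ≤ n := fun ω => WithTop.coe_le_coe.2 (hittingBtwn_le ω)
  have hsvneg : stoppedValue (-M) τ = -stoppedValue M τ := rfl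
  have hsvint : Integrable (stoppedValue M τ) μ := by
    have h := (hsuper.neg.integrable_stoppedValue hτ hτle)
    rw [hsvneg] at h
    exact h.neg.congr (by simp)
  have hM0 : M 0 = fun _ => (1 : ℝ) := by
    funext ω
    simp [hMdef, hSdef, hVdef]
  have hintle : ∫ ω, stoppedValue M τ ω ∂μ ≤ 1 := by
    have h := hsuper.neg.expected_stoppedValue_mono (isStoppingTime_const F 0) hτ
      (fun ω => WithTop.coe_le_coe.2 (Nat.zero_le _)) hτle
    have e1 : ∫ ω, stoppedValue (-M) (fun _ => (WithTop.some (0 : ℕ))) ω ∂μ = -1 := by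
      have e : stoppedValue (-M) (fun _ => (WithTop.some (0 : ℕ))) = fun ω => -(M 0 ω) := rfl
      rw [e]
      simp [hM0]
    have e2 : ∫ ω, stoppedValue (-M) τ ω ∂μ = -∫ ω, stoppedValue M τ ω ∂μ := by
      have e : stoppedValue (-M) τ = fun ω => -(stoppedValue M τ ω) := rfl
      rw [e, integral_neg]
    rw [e1, e2] at h
    linarith
  have hsv0 : (0 : Ω → ℝ) ≤ᵐ[μ] stoppedValue M τ :=
    ae_of_all _ fun ω => (Real.exp_pos _).le
  have hmark := mul_meas_ge_le_integral_of_nonneg hsv0 hsvint ε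
  have hsubset : {ω | ∃ k ∈ Finset.Icc 1 n, a ≤ S k ω ∧ V k ω ≤ v}
      ⊆ {x | ε ≤ stoppedValue M τ x} := by
    rintro ω ⟨k, hk, h1, h2⟩
    have hM : M k ω ∈ Set.Ici ε := by
      simp only [Set.mem_Ici, hεdef]
      apply Real.exp_le_exp.2
      have i1 : l * a ≤ l * S k ω := mul_le_mul_of_nonneg_left h1 hl
      have i2 : φ * V k ω ≤ φ * v := mul_le_mul_of_nonneg_left h2 hφ0
      linarith
    exact stoppedValue_hittingBtwn_mem ⟨k, ⟨Nat.zero_le k, (Finset.mem_Icc.1 hk).2⟩, hM⟩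
  have hfin : μ {x | ε ≤ stoppedValue M τ x} ≠ ⊤ := measure_ne_top μ _
  have htoReal : (μ {x | ε ≤ stoppedValue M τ x}).toReal ≤ 1 / ε := by
    rw [le_div_iff₀ hε, mul_comm]
    exact hmark.trans hintle
  have hεinv : 1 / ε = Real.exp (φ * v - l * a) := by
    rw [hεdef, one_div, ← Real.exp_neg]
    congr 1
    ring
  calc μ {ω | ∃ k ∈ Finset.Icc 1 n, a ≤ S k ω ∧ V k ω ≤ v}
      ≤ μ {x | ε ≤ stoppedValue M τ x} := measure_mono hsubset
  _ = ENNReal.ofReal ((μ {x | ε ≤ stoppedValue M τ x}).toReal) := (ENNReal.ofReal_toReal hfin).symm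
  _ ≤ ENNReal.ofReal (Real.exp (φ * v - l * a)) := by
      apply ENNReal.ofReal_le_ofReal
      rw [← hεinv]
      exact htoReal


/-- a corollary of Freedman's inequality for martingale
difference sequences. -/
theorem statement11 {Ω : Type*} {m0 : MeasurableSpace Ω} {μ : MeasureTheory.Measure Ω}
    [MeasureTheory.IsProbabilityMeasure μ] (F : MeasureTheory.Filtration ℕ m0)
    (Y : ℕ → Ω → ℝ) (b : ℝ) (hb : 0 < b)
    (hadapted : ∀ t, 1 ≤ t → StronglyMeasurable[F t] (Y t))
    (hmdiff : ∀ t, 1 ≤ t → μ[Y t | F (t - 1)] =ᵐ[μ] 0)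
    (hbdd : ∀ t, 1 ≤ t → ∀ᵐ ω ∂μ, |Y t ω| ≤ b)
    (n : ℕ) (hn : 1 ≤ n) (x c : ℝ) (hx : 0 < x) (hc : 1 < c) :
    μ {ω | ∃ k ∈ Finset.Icc 1 n,
        Real.sqrt (2 * c * (∑ t ∈ Finset.Icc 1 k, (μ[(Y t) ^ 2 | F (t - 1)]) ω) * x) +
            4 * b * x / 3 < ∑ t ∈ Finset.Icc 1 k, Y t ω} ≤
      ENNReal.ofReal ((1 + (⌈Real.logb c (2 * n / x)⌉₊ : ℝ)) * Real.exp (-x)) := by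
  classical
  have hc0 : 0 < c := lt_trans one_pos hc
  set S : ℕ → Ω → ℝ := fun k ω => ∑ t ∈ Finset.Icc 1 k, Y t ω with hSdef
  set V : ℕ → Ω → ℝ := fun k ω => ∑ t ∈ Finset.Icc 1 k, (μ[(Y t) ^ 2 | F (t - 1)]) ω with hVdef
  set J : ℕ := ⌈Real.logb c (2 * n / x)⌉₊ with hJ
  set vl : ℕ → ℝ := fun j => b ^ 2 * x / 2 * c ^ j with hvl
  set A : ℕ → ℝ := fun j =>
    (if j = 0 then 0 else Real.sqrt (2 * vl j * x)) + 4 * b * x / 3 with hA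
  have hvlpos : ∀ j, 0 < vl j := fun j => by
    have : (0:ℝ) < c ^ j := pow_pos hc0 j
    positivity
  -- V k ≤ vl J a.e.
  have hYm : ∀ t, 1 ≤ t → AEStronglyMeasurable (Y t) μ := fun t ht =>
    ((hadapted t ht).mono (F.le t)).aestronglyMeasurable
  have hY2m : ∀ t, 1 ≤ t → StronglyMeasurable ((Y t) ^ 2) := by
    intro t ht
    have h := (hadapted t ht).mono (F.le t)
    have e : (Y t) ^ 2 = fun ω => Y t ω * Y t ω := by funext ω; simp [pow_two]
    rw [e]; exact h.mul h
  have hY2int : ∀ t, 1 ≤ t → Integrable ((Y t) ^ 2) μ := fun t ht => by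
    refine Integrable.mono' (integrable_const (b ^ 2)) (hY2m t ht).aestronglyMeasurable ?_
    filter_upwards [hbdd t ht] with ω h
    have h2 : |Y t ω| ^ 2 ≤ b ^ 2 := pow_le_pow_left₀ (abs_nonneg _) h 2
    rw [Real.norm_eq_abs]
    calc |((Y t) ^ 2) ω| = |Y t ω| ^ 2 := by simp [Pi.pow_apply, abs_pow]
    _ ≤ b ^ 2 := h2
  have hcondub : ∀ t, 1 ≤ t → μ[(Y t) ^ 2 | F (t - 1)] ≤ᵐ[μ] fun _ => b ^ 2 := by
    intro t ht
    have h1 : (Y t) ^ 2 ≤ᵐ[μ] fun _ => b ^ 2 := by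
      filter_upwards [hbdd t ht] with ω h
      calc ((Y t) ^ 2) ω = |Y t ω| ^ 2 := by simp [Pi.pow_apply, sq_abs]
      _ ≤ b ^ 2 := pow_le_pow_left₀ (abs_nonneg _) h 2
    have h2 := condExp_mono (m := F (t - 1)) (hY2int t ht) (integrable_const (b ^ 2)) h1
    have h3 : μ[(fun _ => b ^ 2 : Ω → ℝ) | F (t - 1)] = fun _ => b ^ 2 :=
      condExp_const (F.le _) _
    rw [h3] at h2
    exact h2
  have hnJ : (n : ℝ) * b ^ 2 ≤ vl J := by
    have h2nx : (0:ℝ) < 2 * n / x := by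
      have : (0:ℝ) < (n:ℝ) := by exact_mod_cast hn
      positivity
    have hlog : Real.logb c (2 * n / x) ≤ (J : ℝ) := Nat.le_ceil _
    have hpow : 2 * (n:ℝ) / x ≤ c ^ J := by
      have h1 : (2 * (n:ℝ) / x) = c ^ Real.logb c (2 * n / x) :=
        (Real.rpow_logb hc0 hc.ne' h2nx).symm
      have h2 : c ^ Real.logb c (2 * n / x) ≤ c ^ (J : ℝ) :=
        Real.rpow_le_rpow_of_exponent_le hc.le hlog
      rw [h1]
      calc c ^ Real.logb c (2 * n / x) ≤ c ^ (J:ℝ) := h2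
      _ = c ^ J := Real.rpow_natCast c J
    have hx' : x ≠ 0 := hx.ne'
    rw [hvl]
    have : (n:ℝ) * b ^ 2 = b ^ 2 * x / 2 * (2 * n / x) := by field_simp
    rw [this]
    have hb2 : (0:ℝ) < b ^ 2 * x / 2 := by positivity
    exact mul_le_mul_of_nonneg_left hpow hb2.le
  have hgood : ∀ᵐ ω ∂μ, ∀ k, k ∈ Finset.Icc 1 n → V k ω ≤ vl J := by
    rw [MeasureTheory.ae_all_iff]
    intro k
    have h : ∀ᵐ ω ∂μ, ∀ t, t ∈ Finset.Icc 1 k → (μ[(Y t) ^ 2 | F (t - 1)]) ω ≤ b ^ 2 := by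
      rw [MeasureTheory.ae_all_iff]
      intro t
      by_cases ht : 1 ≤ t
      · filter_upwards [hcondub t ht] with ω h _ using h
      · exact ae_of_all _ fun ω htt => absurd (Finset.mem_Icc.1 htt).1 ht
    filter_upwards [h] with ω h hk
    have hkn : k ≤ n := (Finset.mem_Icc.1 hk).2
    calc V k ω ≤ ∑ _t ∈ Finset.Icc 1 k, b ^ 2 := Finset.sum_le_sum h
    _ = (k : ℝ) * b ^ 2 := by simp [Nat.card_Icc]
    _ ≤ (n : ℝ) * b ^ 2 := by
        have : (k:ℝ) ≤ (n:ℝ) := by exact_mod_cast hkn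
        nlinarith [sq_nonneg b]
    _ ≤ vl J := hnJ
  -- the buckets
  set Ebad : Set Ω := {ω | ¬ ∀ k, k ∈ Finset.Icc 1 n → V k ω ≤ vl J} with hEbad
  have hbad : μ Ebad = 0 := by
    rw [hEbad]
    exact hgood
  set Ej : ℕ → Set Ω := fun j =>
    {ω | ∃ k ∈ Finset.Icc 1 n, A j ≤ S k ω ∧ V k ω ≤ vl j} with hEj
  have hincl : {ω | ∃ k ∈ Finset.Icc 1 n,
        Real.sqrt (2 * c * V k ω * x) + 4 * b * x / 3 < S k ω}
      ⊆ (⋃ j ∈ Finset.range (J + 1), Ej j) ∪ Ebad := by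
    rintro ω ⟨k, hk, hlt⟩
    by_cases hg : ∀ k, k ∈ Finset.Icc 1 n → V k ω ≤ vl J
    · left
      simp only [Set.mem_iUnion, Finset.mem_range]
      by_cases h0 : V k ω ≤ vl 0
      · refine ⟨0, Nat.succ_pos J, k, hk, ?_, h0⟩
        have hs : 0 ≤ Real.sqrt (2 * c * V k ω * x) := Real.sqrt_nonneg _
        rw [hA]
        norm_num
        linarith
      · have hex : ∃ j, V k ω ≤ vl j := ⟨J, hg k hk⟩
        have hj := Nat.find_spec hex
        have hjle : Nat.find hex ≤ J := Nat.find_min' hex (hg k hk)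
        have hj0 : Nat.find hex ≠ 0 := by
          intro h
          exact h0 (h ▸ hj)
        obtain ⟨i, hji⟩ : ∃ i, Nat.find hex = i + 1 := ⟨Nat.find hex - 1, by omega⟩
        have hjm : ¬ V k ω ≤ vl i := Nat.find_min hex (by omega)
        push_neg at hjm
        set j := Nat.find hex with hjdef
        have hstepc : c * vl i = vl j := by
          rw [hvl, hji]
          simp only
          rw [pow_succ]
          ring
        have hsq : Real.sqrt (2 * vl j * x) ≤ Real.sqrt (2 * c * V k ω * x) := by
          apply Real.sqrt_le_sqrt
          rw [← hstepc]
          nlinarith [mul_lt_mul_of_pos_left hjm (by positivity : (0:ℝ) < 2 * c * x)]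
        refine ⟨j, by omega, k, hk, ?_, hj⟩
        rw [hA]
        simp only [if_neg hj0]
        linarith
    · right
      exact hg
  have hbucket : ∀ j, j ∈ Finset.range (J + 1) → μ (Ej j) ≤ ENNReal.ofReal (Real.exp (-x)) := by
    intro j _
    by_cases hj0 : j = 0
    · subst hj0
      have h := freedman_one F Y b hb hadapted hmdiff hbdd n (6 / (5 * b)) (A 0) (vl 0)
        (by positivity) (hvlpos 0).le
      refine le_trans h ?_
      apply ENNReal.ofReal_le_ofReal
      apply Real.exp_le_exp.2
      have hA0 : A 0 = 4 * b * x / 3 := by rw [hA]; norm_num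
      rw [hA0]
      have := bucket0_alg hb hx
      calc (Real.exp (6 / (5 * b) * b) - 1 - 6 / (5 * b) * b) / b ^ 2 * vl 0
            - 6 / (5 * b) * (4 * b * x / 3)
          = (Real.exp (6 / (5 * b) * b) - 1 - 6 / (5 * b) * b) / b ^ 2 * (b ^ 2 * x / 2)
            - 6 / (5 * b) * (4 * b * x / 3) := by rw [hvl]; norm_num
      _ ≤ -x := this
    · set l : ℝ := A j / (vl j + A j * b / 3) with hldef
      have hs0 : 0 ≤ Real.sqrt (2 * vl j * x) := Real.sqrt_nonneg _
      have hAj : A j = Real.sqrt (2 * vl j * x) + 4 * b * x / 3 := by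
        rw [hA]; simp [hj0]
      have hApos : 0 < A j := by rw [hAj]; positivity
      have hl0 : 0 ≤ l := by
        rw [hldef]
        have : 0 < vl j + A j * b / 3 := by
          have := hvlpos j
          positivity
        exact (div_pos hApos this).le
      have h := freedman_one F Y b hb hadapted hmdiff hbdd n l (A j) (vl j)
        hl0 (hvlpos j).le
      refine le_trans h ?_
      apply ENNReal.ofReal_le_ofReal
      apply Real.exp_le_exp.2
      exact bucketj_core hb hx (hvlpos j) hs0
        (Real.sq_sqrt (by positivity : (0:ℝ) ≤ 2 * vl j * x)) hAj rfl hldef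
  -- put it together
  calc μ {ω | ∃ k ∈ Finset.Icc 1 n,
        Real.sqrt (2 * c * V k ω * x) + 4 * b * x / 3 < S k ω}
      ≤ μ ((⋃ j ∈ Finset.range (J + 1), Ej j) ∪ Ebad) := measure_mono hincl
  _ ≤ μ (⋃ j ∈ Finset.range (J + 1), Ej j) + μ Ebad := measure_union_le _ _
  _ = μ (⋃ j ∈ Finset.range (J + 1), Ej j) := by rw [hbad, add_zero]
  _ ≤ ∑ j ∈ Finset.range (J + 1), μ (Ej j) := measure_biUnion_finset_le _ _
  _ ≤ ∑ _j ∈ Finset.range (J + 1), ENNReal.ofReal (Real.exp (-x)) :=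
      Finset.sum_le_sum hbucket
  _ = (J + 1) * ENNReal.ofReal (Real.exp (-x)) := by
      rw [Finset.sum_const, Finset.card_range, nsmul_eq_mul]
      push_cast
      ring
  _ = ENNReal.ofReal ((1 + (J : ℝ)) * Real.exp (-x)) := by
      rw [ENNReal.ofReal_mul (by positivity)]
      congr 1
      rw [show ((1:ℝ) + J) = ((J + 1 : ℕ) : ℝ) by push_cast; ring]
      rw [ENNReal.ofReal_natCast]
      push_cast
      ring


end MCEst
end

section
/- Fix c > 1, α > 0, δ ∈ (0,1), and let t̂ = inf{ t ≥ 0 : 2d²·(1 + ⌈log_c(2n/t)⌉₊)·e^{−t} ≤ δ }. Suppose that for a pair (i,j) ∈ [d]² with N_i > 0 it holds that |P̂_{i,j} − P_{i,j}| ≤ sqrt( (N_i/(N_i+dα))·2c P_{i,j}(1−P_{i,j}) t̂ /(N_i+dα) ) + (4/3) t̂/(N_i+dα) + |α − dα P_{i,j}|/(N_i+dα). Then |P̂_{i,j} − P_{i,j}| ≤ B̂_{i,j}, where B̂_{i,j} = ( sqrt( c t̂ / (2 N_i) ) + sqrt( c t̂ / (2 N_i) + sqrt( 2c P̂_{i,j}(1−P̂_{i,j})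 t̂ / N_i ) + ( (4/3) t̂ + |α − dα P̂_{i,j}| ) / N_i ) )². -/
open Finset Matrix Real MeasureTheory
open scoped Classical BigOperators

namespace MCEst

set_option maxHeartbeats 1000000 in
lemma mysqrt_add_le (a b : ℝ) (ha : 0 ≤ a) (hb : 0 ≤ b) :
    Real.sqrt (a + b) ≤ Real.sqrt a + Real.sqrt b := by
  have h1 : a + b ≤ (Real.sqrt a + Real.sqrt b) ^ 2 := by
    have := Real.sq_sqrt ha; have := Real.sq_sqrt hb
    nlinarith [Real.sqrt_nonneg a, Real.sqrt_nonneg b]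
  calc Real.sqrt (a + b) ≤ Real.sqrt ((Real.sqrt a + Real.sqrt b) ^ 2) := Real.sqrt_le_sqrt h1
  _ = Real.sqrt a + Real.sqrt b := Real.sqrt_sq (by positivity)

set_option maxHeartbeats 1000000 in
lemma myquad (Δ a2 B : ℝ) (hΔ : 0 ≤ Δ) (ha : 0 ≤ a2) (hB : 0 ≤ B)
    (h : Δ ≤ 2 * a2 * Real.sqrt Δ + B) :
    Δ ≤ (a2 + Real.sqrt (a2 ^ 2 + B)) ^ 2 := by
  have hu0 : 0 ≤ Real.sqrt Δ := Real.sqrt_nonneg _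
  have hu2 : Real.sqrt Δ ^ 2 = Δ := Real.sq_sqrt hΔ
  have hs0 : 0 ≤ Real.sqrt (a2 ^ 2 + B) := Real.sqrt_nonneg _
  have hs2 : Real.sqrt (a2 ^ 2 + B) ^ 2 = a2 ^ 2 + B := Real.sq_sqrt (by positivity)
  have hus : Real.sqrt Δ ≤ a2 + Real.sqrt (a2 ^ 2 + B) := by
    nlinarith [sq_nonneg (Real.sqrt Δ - a2 - Real.sqrt (a2 ^ 2 + B)),
      sq_nonneg (Real.sqrt Δ - a2 + Real.sqrt (a2 ^ 2 + B))]
  nlinarith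


set_option maxHeartbeats 1000000 in
/-- deterministic conversion of the unobservable bound into the
fully observable bound B̂. -/
theorem statement13 (d n : ℕ) (P : Matrix (Fin d) (Fin d) ℝ) (hP : IsStochastic P)
    (c α δ : ℝ) (hc : 1 < c) (hα : 0 < α) (hδ : 0 < δ) (hδ1 : δ < 1)
    (x : Fin n → Fin d) (i j : Fin d) (hNi : 0 < Ncount x i)
    (hyp : |Phat α x i j - P i j| ≤
      Real.sqrt (((Ncount x i : ℝ) / ((Ncount x i : ℝ) + d * α)) *
          (2 * c * P i j * (1 - P i j) * that d n c δ) / ((Ncount x i : ℝ) + d * α)) +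
        (4 / 3) * that d n c δ / ((Ncount x i : ℝ) + d * α) +
        |α - d * α * P i j| / ((Ncount x i : ℝ) + d * α)) :
    |Phat α x i j - P i j| ≤ Bhat α c δ x i j := by
  have hd : 0 < d := i.pos
  have hd1 : (1 : ℝ) ≤ d := by exact_mod_cast hd
  have hc0 : (0 : ℝ) < c := by linarith
  unfold Bhat
  set N : ℝ := (Ncount x i : ℝ) with hNdef
  have hN : (0 : ℝ) < N := by rw [hNdef]; exact_mod_cast hNi
  have hdα : (0 : ℝ) < (d : ℝ) * α := by positivity
  have hD : (0 : ℝ) < N + d * α := by linarith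
  set t : ℝ := that d n c δ with htdef
  have ht : 0 ≤ t := Real.sInf_nonneg (fun y hy => hy.1)
  set p : ℝ := P i j with hpdef
  have hp0 : 0 ≤ p := hP.1 i j
  have hp1 : p ≤ 1 := by
    have hs := hP.2 i
    have := Finset.single_le_sum (f := fun k => P i k) (fun k _ => hP.1 i k) (mem_univ j)
    rw [hs] at this; exact this
  set q : ℝ := Phat α x i j with hqdef
  have hq0 : 0 ≤ q := by
    rw [hqdef]; unfold Phat; simp only [Matrix.of_apply]; positivity
  have hNpair : (Npair x i j : ℝ) ≤ N := by
    have hsub : (univ.filter fun t : Fin n => (t : ℕ) + 1 < n ∧ x t = i ∧ x (succAt t) = j)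
        ⊆ (univ.filter fun t : Fin n => (t : ℕ) + 1 < n ∧ x t = i) := by
      intro s hs; simp only [mem_filter] at *; tauto
    have := Finset.card_le_card hsub
    rw [hNdef]; unfold Npair Ncount at *; exact_mod_cast this
  have hq1 : q ≤ 1 := by
    rw [hqdef]; unfold Phat; simp only [Matrix.of_apply]
    rw [div_le_one hD]
    have : α ≤ (d : ℝ) * α := by nlinarith
    linarith
  clear_value N t p q
  set Δ : ℝ := |q - p| with hΔdef
  have hΔ0 : 0 ≤ Δ := abs_nonneg _
  have hpp : 0 ≤ p * (1 - p) := mul_nonneg hp0 (by linarith)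
  have hqq : 0 ≤ q * (1 - q) := mul_nonneg hq0 (by linarith)
  have hA : 0 ≤ 2 * c * p * (1 - p) * t := by
    nlinarith [mul_nonneg (mul_nonneg (show (0:ℝ) ≤ 2 * c by positivity) hpp) ht]
  have hAq : 0 ≤ 2 * c * q * (1 - q) * t := by
    nlinarith [mul_nonneg (mul_nonneg (show (0:ℝ) ≤ 2 * c by positivity) hqq) ht]
  -- rewrite the sqrt in hyp
  have hsq1 : Real.sqrt ((N / (N + d * α)) * (2 * c * p * (1 - p) * t) / (N + d * α))
      = Real.sqrt (2 * c * p * (1 - p) * t * N) / (N + d * α) := by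
    rw [show (N / (N + d * α)) * (2 * c * p * (1 - p) * t) / (N + d * α)
        = (2 * c * p * (1 - p) * t * N) / (N + d * α) ^ 2 by field_simp]
    rw [Real.sqrt_div (by nlinarith) _, Real.sqrt_sq hD.le]
  rw [hsq1, ← add_div, ← add_div, le_div_iff₀ hD] at hyp
  -- step 1
  have habs : |α - d * α * p| ≤ |α - d * α * q| + d * α * Δ := by
    have h1 : α - d * α * p = (α - d * α * q) + (d * α) * (q - p) := by ring
    calc |α - d * α * p| = |(α - d * α * q) + (d * α) * (q - p)| := by rw [← h1]
    _ ≤ |α - d * α * q| + |(d * α) * (q - p)| := abs_add_le _ _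
    _ = |α - d * α * q| + d * α * Δ := by rw [abs_mul, abs_of_pos hdα, hΔdef]
  have h1 : Δ * N ≤ Real.sqrt (2 * c * p * (1 - p) * t * N) + (4 / 3) * t + |α - d * α * q| := by
    linarith
  -- step 2
  have hsq2 : Real.sqrt (2 * c * p * (1 - p) * t * N) / N
      = Real.sqrt (2 * c * p * (1 - p) * t / N) := by
    rw [show 2 * c * p * (1 - p) * t / N = (2 * c * p * (1 - p) * t * N) / N ^ 2 by
      field_simp]
    rw [Real.sqrt_div (by nlinarith) _, Real.sqrt_sq hN.le]
  have h2 : Δ ≤ Real.sqrt (2 * c * p * (1 - p) * t / N)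
      + ((4 / 3) * t + |α - d * α * q|) / N := by
    rw [← hsq2, ← add_div, le_div_iff₀ hN]
    linarith
  -- step 3
  have hvar : p * (1 - p) ≤ q * (1 - q) + Δ := by
    have h1' : p - q ≤ Δ := by rw [hΔdef, abs_sub_comm]; exact le_abs_self _
    have h2' : q - p ≤ Δ := by rw [hΔdef]; exact le_abs_self _
    nlinarith
  have h3 : Real.sqrt (2 * c * p * (1 - p) * t / N)
      ≤ Real.sqrt (2 * c * q * (1 - q) * t / N) + Real.sqrt (2 * c * t / N) * Real.sqrt Δ := by
    have hmono : 2 * c * p * (1 - p) * t / N ≤ 2 * c * q * (1 - q) * t / N + 2 * c * t / N * Δ := by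
      have hle : 2 * c * p * (1 - p) * t ≤ 2 * c * q * (1 - q) * t + 2 * c * t * Δ := by
        nlinarith [mul_le_mul_of_nonneg_left hvar (show (0:ℝ) ≤ 2 * c * t by positivity)]
      calc 2 * c * p * (1 - p) * t / N ≤ (2 * c * q * (1 - q) * t + 2 * c * t * Δ) / N := by
            gcongr
      _ = 2 * c * q * (1 - q) * t / N + 2 * c * t / N * Δ := by ring
    have hx1 : 0 ≤ 2 * c * q * (1 - q) * t / N := by 
      rw [div_nonneg_iff]; left; exact ⟨hAq, hN.le⟩ 
    have hx2 : 0 ≤ 2 * c * t / N * Δ := by positivity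
    calc Real.sqrt (2 * c * p * (1 - p) * t / N)
        ≤ Real.sqrt (2 * c * q * (1 - q) * t / N + 2 * c * t / N * Δ) := Real.sqrt_le_sqrt hmono
    _ ≤ Real.sqrt (2 * c * q * (1 - q) * t / N) + Real.sqrt (2 * c * t / N * Δ) :=
        mysqrt_add_le _ _ hx1 hx2
    _ = Real.sqrt (2 * c * q * (1 - q) * t / N) + Real.sqrt (2 * c * t / N) * Real.sqrt Δ := by
        rw [Real.sqrt_mul (by positivity)]
  -- assemble
  set a2 : ℝ := Real.sqrt (c * t / (2 * N)) with ha2def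
  have ha2 : 0 ≤ a2 := Real.sqrt_nonneg _
  have hfour : Real.sqrt (2 * c * t / N) = 2 * a2 := by
    rw [ha2def, show 2 * c * t / N = 2 ^ 2 * (c * t / (2 * N)) by field_simp,
      Real.sqrt_mul (by norm_num), Real.sqrt_sq (by norm_num : (0:ℝ) ≤ 2)]
  set B : ℝ := Real.sqrt (2 * c * q * (1 - q) * t / N) + ((4 / 3) * t + |α - d * α * q|) / N
    with hBdef
  have hB0 : 0 ≤ B := by
    rw [hBdef]
    have : 0 ≤ ((4 / 3) * t + |α - d * α * q|) / N := by positivity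
    have := Real.sqrt_nonneg (2 * c * q * (1 - q) * t / N)
    linarith
  have hkey : Δ ≤ 2 * a2 * Real.sqrt Δ + B := by
    rw [hBdef, ← hfour]; linarith
  have hfinal := myquad Δ a2 B hΔ0 ha2 hB0 hkey
  have ha2sq : a2 ^ 2 = c * t / (2 * N) := Real.sq_sqrt (by positivity)
  have hEq : a2 ^ 2 + B = c * t / (2 * N) + Real.sqrt (2 * c * q * (1 - q) * t / N)
      + ((4 / 3) * t + |α - d * α * q|) / N := by
    rw [ha2sq, hBdef]; ring
  rw [hEq] at hfinal
  exact hfinal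


end MCEst
end
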